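/- arXiv:2105.01932 — 6 statements merged into one kernel-verified Lean document; each statement's English description precedes it below -/
import Mathlib

section
/- Let N ≥ 1 be an integer and let α, β ≥ 1 and 0 < δ ≤ min{α, β} be real constants. Then there exists a constant C = C(N, α, β, δ) > 0 such that for all x₁, x₂ ∈ ℝ^N with x₁ ≠ x₂ and all y ∈ ℝ^N, one has 1/((1+|y−x₁|)^α (1+|y−x₂|)^β) ≤ (C/|x₁−x₂|^δ) · ( 1/(1+|y−x₁|)^{α+β−δ} + 1/(1+|y−x₂|)^{α+β−δ} ). -/
open MeasureTheory Set

noncomputable section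

lemma aux_split (α β δ a b : ℝ) (hδ0 : 0 < δ) (hδa : δ ≤ α) (hβ0 : 0 ≤ β)
    (ha : 0 ≤ a) (hb : 0 ≤ b) :
    1 / ((1 + a) ^ (α - δ) * (1 + b) ^ β) ≤
      1 / (1 + a) ^ (α + β - δ) + 1 / (1 + b) ^ (α + β - δ) := by
  have ha1 : (0:ℝ) < 1 + a := by linarith
  have hb1 : (0:ℝ) < 1 + b := by linarith
  rcases le_total a b with hab | hab
  · have h1 : (1 + a) ^ (α + β - δ) ≤ (1 + a) ^ (α - δ) * (1 + b) ^ β := by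
      have : (1 + a) ^ (α + β - δ) = (1 + a) ^ (α - δ) * (1 + a) ^ β := by
        rw [← Real.rpow_add ha1]; ring_nf
      rw [this]
      exact mul_le_mul_of_nonneg_left (Real.rpow_le_rpow ha1.le (by linarith) hβ0)
        (by positivity)
    have := one_div_le_one_div_of_le (Real.rpow_pos_of_pos ha1 _) h1
    have h2 : 0 ≤ 1 / (1 + b) ^ (α + β - δ) := by positivity
    linarith
  · have h1 : (1 + b) ^ (α + β - δ) ≤ (1 + a) ^ (α - δ) * (1 + b) ^ β := by
      have : (1 + b) ^ (α + β - δ) = (1 + b) ^ (α - δ) * (1 + b) ^ β := by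
        rw [← Real.rpow_add hb1]; ring_nf
      rw [this]
      exact mul_le_mul_of_nonneg_right (Real.rpow_le_rpow hb1.le (by linarith) (by linarith))
        (by positivity)
    have := one_div_le_one_div_of_le (Real.rpow_pos_of_pos hb1 _) h1
    have h2 : 0 ≤ 1 / (1 + a) ^ (α + β - δ) := by positivity
    linarith

lemma aux_half (α β δ a b d : ℝ) (hδ0 : 0 < δ) (hδa : δ ≤ α) (hβ0 : 0 ≤ β)
    (ha : 0 ≤ a) (hb : 0 ≤ b) (hd : 0 < d) (had : d / 2 ≤ a) :
    1 / ((1 + a) ^ α * (1 + b) ^ β) ≤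
      (2:ℝ) ^ δ / d ^ δ *
        (1 / (1 + a) ^ (α + β - δ) + 1 / (1 + b) ^ (α + β - δ)) := by
  have ha1 : (0:ℝ) < 1 + a := by linarith
  have hb1 : (0:ℝ) < 1 + b := by linarith
  have hsplit : (1 + a) ^ α = (1 + a) ^ δ * (1 + a) ^ (α - δ) := by
    rw [← Real.rpow_add ha1]; ring_nf
  have hstep1 : 1 / (1 + a) ^ δ ≤ (2:ℝ) ^ δ / d ^ δ := by
    have hdl : (d / 2) ^ δ ≤ (1 + a) ^ δ :=
      Real.rpow_le_rpow (by positivity) (by linarith) hδ0.le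
    have hdd : (d / 2 : ℝ) ^ δ = d ^ δ / 2 ^ δ :=
      Real.div_rpow hd.le (by norm_num : (0:ℝ) ≤ 2) δ
    rw [div_le_div_iff₀ (Real.rpow_pos_of_pos ha1 _) (Real.rpow_pos_of_pos hd _), one_mul]
    calc d ^ δ = 2 ^ δ * (d ^ δ / 2 ^ δ) := by
          field_simp
      _ ≤ 2 ^ δ * (1 + a) ^ δ := by
          rw [← hdd]
          exact mul_le_mul_of_nonneg_left hdl (by positivity)
  calc 1 / ((1 + a) ^ α * (1 + b) ^ β)
      = (1 / (1 + a) ^ δ) * (1 / ((1 + a) ^ (α - δ) * (1 + b) ^ β)) := by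
        rw [hsplit]; field_simp
    _ ≤ ((2:ℝ) ^ δ / d ^ δ) *
        (1 / (1 + a) ^ (α + β - δ) + 1 / (1 + b) ^ (α + β - δ)) := by
        apply mul_le_mul hstep1 (aux_split α β δ a b hδ0 hδa hβ0 ha hb) (by positivity)
          (by positivity)

/-- Lemma A.1: for `α, β ≥ 1` and `0 < δ ≤ min α β`, there is `C > 0` such that for all
`x₁ ≠ x₂` and all `y` in `ℝ^N`,
`1/((1+|y−x₁|)^α (1+|y−x₂|)^β) ≤ (C/|x₁−x₂|^δ) (1/(1+|y−x₁|)^{α+β−δ} + 1/(1+|y−x₂|)^{α+β−δ})`. -/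
theorem stmt0 (N : ℕ) (hN : 1 ≤ N) (α β δ : ℝ) (hα : 1 ≤ α) (hβ : 1 ≤ β)
    (hδ0 : 0 < δ) (hδ : δ ≤ min α β) :
    ∃ C : ℝ, 0 < C ∧ ∀ x₁ x₂ y : EuclideanSpace ℝ (Fin N), x₁ ≠ x₂ →
      1 / ((1 + ‖y - x₁‖) ^ α * (1 + ‖y - x₂‖) ^ β) ≤
        C / ‖x₁ - x₂‖ ^ δ *
          (1 / (1 + ‖y - x₁‖) ^ (α + β - δ) + 1 / (1 + ‖y - x₂‖) ^ (α + β - δ)) := by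
  refine ⟨(2:ℝ) ^ δ, Real.rpow_pos_of_pos (by norm_num) _, ?_⟩
  intro x₁ x₂ y hx
  set a := ‖y - x₁‖ with haa
  set b := ‖y - x₂‖ with hbb
  set d := ‖x₁ - x₂‖ with hdd
  have hd : 0 < d := norm_sub_pos_iff.mpr hx
  have ha : 0 ≤ a := norm_nonneg _
  have hb : 0 ≤ b := norm_nonneg _
  have hδa : δ ≤ α := le_trans hδ (min_le_left _ _)
  have hδb : δ ≤ β := le_trans hδ (min_le_right _ _)
  have htri : d ≤ a + b := by
    have : x₁ - x₂ = (y - x₂) - (y - x₁) := by abel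
    calc d = ‖(y - x₂) - (y - x₁)‖ := by rw [hdd, this]
      _ ≤ ‖y - x₂‖ + ‖y - x₁‖ := norm_sub_le _ _
      _ = a + b := by ring
  rcases le_total (d / 2) a with had | had
  · exact aux_half α β δ a b d hδ0 hδa (by linarith) ha hb hd had
  · have hbd : d / 2 ≤ b := by linarith
    have := aux_half β α δ b a d hδ0 hδb (by linarith) hb ha hd hbd
    calc 1 / ((1 + a) ^ α * (1 + b) ^ β)
        = 1 / ((1 + b) ^ β * (1 + a) ^ α) := by ring_nf
      _ ≤ (2:ℝ) ^ δ / d ^ δ *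
          (1 / (1 + b) ^ (β + α - δ) + 1 / (1 + a) ^ (β + α - δ)) := this
      _ = (2:ℝ) ^ δ / d ^ δ *
          (1 / (1 + a) ^ (α + β - δ) + 1 / (1 + b) ^ (α + β - δ)) := by
          rw [add_comm β α]; ring
end
end

section
/- Let N ≥ 1 be an integer and let α ≥ β ≥ 1 be real constants with α > N. Then there exists a constant C = C(N, α, β) > 0 such that for all a, b ∈ ℝ^N with a ≠ b, ∫_{ℝ^N} (1+|y−a|)^{−α} (1+|y−b|)^{−β} dy ≤ C · |a−b|^{−β}. -/
open MeasureTheory Set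

noncomputable section

private lemma aux_amgm {u v : ℝ} (hu : 0 < u) (hv : 0 < v) {θ : ℝ} (hθ0 : 0 ≤ θ)
    (hθ1 : θ ≤ 1) : u ^ θ * v ^ (1 - θ) ≤ u + v := by
  rcases le_total u v with h | h
  · calc u ^ θ * v ^ (1 - θ) ≤ v ^ θ * v ^ (1 - θ) :=
        mul_le_mul_of_nonneg_right (Real.rpow_le_rpow hu.le h hθ0) (Real.rpow_nonneg hv.le _)
    _ = v := by rw [← Real.rpow_add hv]; simp
    _ ≤ u + v := le_add_of_nonneg_left hu.le
  · calc u ^ θ * v ^ (1 - θ) ≤ u ^ θ * u ^ (1 - θ) :=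
        mul_le_mul_of_nonneg_left (Real.rpow_le_rpow hv.le h (by linarith))
          (Real.rpow_nonneg hu.le _)
    _ = u := by rw [← Real.rpow_add hu]; simp
    _ ≤ u + v := le_add_of_nonneg_right hv.le

private lemma aux_pt {α β t s d : ℝ} (hβ : 0 < β) (hβα : β ≤ α) (hα0 : 0 < α)
    (ht : 0 ≤ t) (hs : 0 ≤ s) (hd : 0 < d) (hts : d ≤ t + s) :
    (1 + t) ^ (-α) * (1 + s) ^ (-β) ≤
      2 ^ β * d ^ (-β) * (2 * (1 + t) ^ (-α) + (1 + s) ^ (-α)) := by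
  have hpt : (0:ℝ) < 1 + t := by linarith
  have hps : (0:ℝ) < 1 + s := by linarith
  have h2 : ((d : ℝ) / 2) ^ (-β) = 2 ^ β * d ^ (-β) := by
    rw [Real.div_rpow hd.le (by norm_num), Real.rpow_neg (by norm_num : (0:ℝ) ≤ 2)]
    field_simp
  have key : ∀ r : ℝ, 0 ≤ r → d / 2 ≤ r → (1 + r) ^ (-β) ≤ 2 ^ β * d ^ (-β) := by
    intro r hr0 hr
    rw [← h2]
    exact Real.rpow_le_rpow_of_nonpos (by positivity) (by linarith) (by linarith)
  rcases le_or_gt (d / 2) s with hcs | hcs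
  · -- second factor small
    have h1 : (1 + t) ^ (-α) * (1 + s) ^ (-β) ≤ (1 + t) ^ (-α) * (2 ^ β * d ^ (-β)) :=
      mul_le_mul_of_nonneg_left (key s hs hcs) (Real.rpow_nonneg hpt.le _)
    have h3 : (0:ℝ) ≤ 2 ^ β * d ^ (-β) := by positivity
    nlinarith [Real.rpow_nonneg hpt.le (-α), Real.rpow_nonneg hps.le (-α),
      mul_nonneg h3 (Real.rpow_nonneg hpt.le (-α)),
      mul_nonneg h3 (Real.rpow_nonneg hps.le (-α))]
  · -- then t ≥ d/2
    have hct : d / 2 ≤ t := by linarith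
    have hθ0 : 0 ≤ (α - β) / α := div_nonneg (by linarith) hα0.le
    have hθ1 : (α - β) / α ≤ 1 := (div_le_one hα0).2 (by linarith)
    have hgm := aux_amgm (Real.rpow_pos_of_pos hpt (-α)) (Real.rpow_pos_of_pos hps (-α))
      hθ0 hθ1
    rw [← Real.rpow_mul hpt.le, ← Real.rpow_mul hps.le] at hgm
    have e1 : -α * ((α - β) / α) = β - α := by field_simp; ring
    have e2 : -α * (1 - (α - β) / α) = -β := by field_simp; ring
    rw [e1, e2] at hgm
    have hsplit : (1 + t) ^ (-α) = (1 + t) ^ (-β) * (1 + t) ^ (β - α) := by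
      rw [← Real.rpow_add hpt]
      congr 1
      ring
    calc (1 + t) ^ (-α) * (1 + s) ^ (-β)
        = (1 + t) ^ (-β) * ((1 + t) ^ (β - α) * (1 + s) ^ (-β)) := by rw [hsplit]; ring
      _ ≤ (2 ^ β * d ^ (-β)) * ((1 + t) ^ (-α) + (1 + s) ^ (-α)) :=
          mul_le_mul (key t ht hct) hgm (by positivity) (by positivity)
      _ ≤ 2 ^ β * d ^ (-β) * (2 * (1 + t) ^ (-α) + (1 + s) ^ (-α)) := by
          apply mul_le_mul_of_nonneg_left _ (by positivity)
          nlinarith [Real.rpow_nonneg hpt.le (-α)]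

/-- For `α ≥ β ≥ 1` with `α > N`, there is `C > 0` such that for all `a ≠ b` in `ℝ^N`,
`∫_{ℝ^N} (1+|y−a|)^{−α} (1+|y−b|)^{−β} dy ≤ C |a−b|^{−β}`. -/
theorem stmt1 (N : ℕ) (hN : 1 ≤ N) (α β : ℝ) (hβ : 1 ≤ β) (hβα : β ≤ α) (hα : (N : ℝ) < α) :
    ∃ C : ℝ, 0 < C ∧ ∀ a b : EuclideanSpace ℝ (Fin N), a ≠ b →
      (∫ y : EuclideanSpace ℝ (Fin N),
          (1 + ‖y - a‖) ^ (-α) * (1 + ‖y - b‖) ^ (-β)) ≤ C * ‖a - b‖ ^ (-β) := by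
  have hβ0 : (0:ℝ) < β := lt_of_lt_of_le one_pos hβ
  have hα0 : (0:ℝ) < α := lt_of_lt_of_le hβ0 hβα
  have hfin : (Module.finrank ℝ (EuclideanSpace ℝ (Fin N)) : ℝ) < α := by
    rw [finrank_euclideanSpace_fin]; exact hα
  have hI : Integrable (fun y : EuclideanSpace ℝ (Fin N) => (1 + ‖y‖) ^ (-α)) :=
    integrable_one_add_norm hfin
  set I : ℝ := ∫ y : EuclideanSpace ℝ (Fin N), (1 + ‖y‖) ^ (-α) with hIdef
  have hI0 : 0 ≤ I :=
    integral_nonneg fun y => Real.rpow_nonneg (by positivity) _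
  refine ⟨3 * 2 ^ β * I + 1, by positivity, ?_⟩
  intro a b hab
  have hd0 : (0:ℝ) < ‖a - b‖ := norm_pos_iff.mpr (sub_ne_zero.mpr hab)
  have hIa : Integrable (fun y : EuclideanSpace ℝ (Fin N) => (1 + ‖y - a‖) ^ (-α)) :=
    hI.comp_sub_right a
  have hIb : Integrable (fun y : EuclideanSpace ℝ (Fin N) => (1 + ‖y - b‖) ^ (-α)) :=
    hI.comp_sub_right b
  have hG : Integrable (fun y : EuclideanSpace ℝ (Fin N) =>
      2 ^ β * ‖a - b‖ ^ (-β) * (2 * (1 + ‖y - a‖) ^ (-α) + (1 + ‖y - b‖) ^ (-α))) :=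
    ((hIa.const_mul 2).add hIb).const_mul _
  have hpt : ∀ y : EuclideanSpace ℝ (Fin N),
      (1 + ‖y - a‖) ^ (-α) * (1 + ‖y - b‖) ^ (-β) ≤
        2 ^ β * ‖a - b‖ ^ (-β) * (2 * (1 + ‖y - a‖) ^ (-α) + (1 + ‖y - b‖) ^ (-α)) := by
    intro y
    have hts : ‖a - b‖ ≤ ‖y - a‖ + ‖y - b‖ := by
      have : a - b = (y - b) - (y - a) := by abel
      rw [this]
      exact (norm_sub_le _ _).trans (by rw [add_comm])
    exact aux_pt hβ0 hβα hα0 (norm_nonneg _) (norm_nonneg _) hd0 hts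
  have hmono :
      (∫ y : EuclideanSpace ℝ (Fin N), (1 + ‖y - a‖) ^ (-α) * (1 + ‖y - b‖) ^ (-β)) ≤
      ∫ y : EuclideanSpace ℝ (Fin N),
        2 ^ β * ‖a - b‖ ^ (-β) * (2 * (1 + ‖y - a‖) ^ (-α) + (1 + ‖y - b‖) ^ (-α)) :=
    integral_mono_of_nonneg (ae_of_all _ fun y => by positivity) hG (ae_of_all _ hpt)
  have hea : (∫ y : EuclideanSpace ℝ (Fin N), (1 + ‖y - a‖) ^ (-α)) = I :=
    integral_sub_right_eq_self (fun y => (1 + ‖y‖) ^ (-α)) a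
  have heb : (∫ y : EuclideanSpace ℝ (Fin N), (1 + ‖y - b‖) ^ (-α)) = I :=
    integral_sub_right_eq_self (fun y => (1 + ‖y‖) ^ (-α)) b
  have hcalc : (∫ y : EuclideanSpace ℝ (Fin N),
      2 ^ β * ‖a - b‖ ^ (-β) * (2 * (1 + ‖y - a‖) ^ (-α) + (1 + ‖y - b‖) ^ (-α)))
      = 2 ^ β * ‖a - b‖ ^ (-β) * (2 * I + I) := by
    rw [integral_const_mul, integral_add (hIa.const_mul 2) hIb, integral_const_mul, hea, heb]
  have hfinal : 2 ^ β * ‖a - b‖ ^ (-β) * (2 * I + I) ≤ (3 * 2 ^ β * I + 1) * ‖a - b‖ ^ (-β) := by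
    have h1 : (0:ℝ) ≤ ‖a - b‖ ^ (-β) := Real.rpow_nonneg hd0.le _
    have h2 : (0:ℝ) ≤ (2:ℝ) ^ β := Real.rpow_nonneg (by norm_num) _
    nlinarith
  calc (∫ y : EuclideanSpace ℝ (Fin N), (1 + ‖y - a‖) ^ (-α) * (1 + ‖y - b‖) ^ (-β))
      ≤ 2 ^ β * ‖a - b‖ ^ (-β) * (2 * I + I) := by rw [← hcalc]; exact hmono
    _ ≤ (3 * 2 ^ β * I + 1) * ‖a - b‖ ^ (-β) := hfinal
end
end

section
/- Let N ≥ 1 be an integer, ρ > 0, and let α, β be real constants with α > N and 0 < β < N. Then there exists a constant C = C(N, α, β, ρ) > 0 such that for all x, y ∈ ℝ^N and all t > 0 satisfying |y−x|² + t² ≥ ρ², one has ∫_{ℝ^N} 1/((t+|z|)^α · |y−z−x|^β) dz ≤ C · ( (1+|y−x|)^{−β} · t^{−(α−N)} + (1+|y−x|)^{−(α+β−N)} ). -/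
set_option maxHeartbeats 1000000

open MeasureTheory Set Metric Module
open scoped ENNReal NNReal

noncomputable section

section Aux

variable {E : Type*} [NormedAddCommGroup E] [NormedSpace ℝ E] [MeasurableSpace E]
  [BorelSpace E] [FiniteDimensional ℝ E] {μ : Measure E} [μ.IsAddHaarMeasure]

/-- Scaling for the lower Lebesgue integral under `x ↦ R • x`. -/
lemma lintegral_comp_smul_aux (g : E → ℝ≥0∞) (hg : Measurable g) {R : ℝ} (hR : 0 < R) :
    ∫⁻ x, g x ∂μ = ENNReal.ofReal (R ^ finrank ℝ E) * ∫⁻ x, g (R • x) ∂μ := by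
  have h1 : ∫⁻ x, g (R • x) ∂μ = ENNReal.ofReal ((R ^ finrank ℝ E)⁻¹) * ∫⁻ x, g x ∂μ := by
    rw [← lintegral_map hg (measurable_const_smul R), Measure.map_addHaar_smul μ hR.ne',
      lintegral_smul_measure, abs_of_nonneg (by positivity), smul_eq_mul]
  rw [h1, ← mul_assoc, ← ENNReal.ofReal_mul (by positivity),
    mul_inv_cancel₀ (by positivity), ENNReal.ofReal_one, one_mul]

/-- Finiteness of `∫_{ball 0 1} ‖z‖^{-β}` for `0 < β < dim`. -/
lemma aux_ball_lt_top [Nontrivial E] {β : ℝ} (hβ0 : 0 < β) (hβ : β < finrank ℝ E) :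
    (∫⁻ z in ball (0 : E) 1, ENNReal.ofReal (‖z‖ ^ (-β)) ∂μ) < ⊤ := by
  set n := finrank ℝ E with hn
  set A : ℕ → Set E := fun k => {z | (2:ℝ)⁻¹ ^ (k+1) ≤ ‖z‖ ∧ ‖z‖ < (2:ℝ)⁻¹ ^ k} with hA
  have hq01 : (0:ℝ) < 2⁻¹ := by norm_num
  have hcover : ball (0 : E) 1 ⊆ {0} ∪ ⋃ k, A k := by
    intro z hz
    rcases eq_or_ne z 0 with rfl | hz0
    · exact Or.inl rfl
    have hzpos : 0 < ‖z‖ := norm_pos_iff.2 hz0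
    have hz1 : ‖z‖ < 1 := by simpa using mem_ball_iff_norm.1 hz
    have hex : ∃ m, (2:ℝ)⁻¹ ^ (m+1) ≤ ‖z‖ := by
      obtain ⟨m, hm⟩ := exists_pow_lt_of_lt_one hzpos (by norm_num : (2:ℝ)⁻¹ < 1)
      exact ⟨m, le_trans (pow_le_pow_of_le_one hq01.le (by norm_num) (m.le_succ)) hm.le⟩
    right
    refine mem_iUnion.2 ⟨Nat.find hex, Nat.find_spec hex, ?_⟩
    rcases Nat.eq_zero_or_pos (Nat.find hex) with h0 | hpos
    · rw [h0]; simpa using hz1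
    · have := Nat.find_min hex (Nat.sub_lt hpos one_pos)
      push_neg at this
      calc ‖z‖ < (2:ℝ)⁻¹ ^ (Nat.find hex - 1 + 1) := this
        _ = (2:ℝ)⁻¹ ^ (Nat.find hex) := by rw [Nat.sub_add_cancel hpos]
  have hAsub : ∀ k, A k ⊆ closedBall (0 : E) ((2:ℝ)⁻¹ ^ k) := by
    intro k z hz
    simpa [mem_closedBall_iff_norm] using hz.2.le
  set r : ℝ := (2:ℝ) ^ β * (2:ℝ)⁻¹ ^ n with hr
  have hkey : ∀ k : ℕ, ((2:ℝ)⁻¹ ^ k) ^ (-β) = ((2:ℝ) ^ β) ^ k := by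
    intro k
    rw [inv_pow, Real.inv_rpow (by positivity), Real.rpow_neg (by positivity), inv_inv,
      ← Real.rpow_natCast (2:ℝ) k, ← Real.rpow_mul (by norm_num), mul_comm,
      Real.rpow_mul (by norm_num), Real.rpow_natCast]
  have hterm : ∀ k : ℕ, ((2:ℝ)⁻¹ ^ (k+1)) ^ (-β) * ((2:ℝ)⁻¹ ^ k) ^ n
      = (2:ℝ) ^ β * r ^ k := by
    intro k
    rw [hkey (k+1), pow_succ, mul_comm (((2:ℝ)^β)^k), hr, mul_pow, mul_assoc]
    ring
  have hbound : ∀ k : ℕ, (∫⁻ z in A k, ENNReal.ofReal (‖z‖ ^ (-β)) ∂μ)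
      ≤ ENNReal.ofReal ((2:ℝ) ^ β * r ^ k) * μ (ball (0:E) 1) := by
    intro k
    have h1 : (∫⁻ z in A k, ENNReal.ofReal (‖z‖ ^ (-β)) ∂μ)
        ≤ ∫⁻ _ in A k, ENNReal.ofReal (((2:ℝ)⁻¹ ^ (k+1)) ^ (-β)) ∂μ := by
      refine setLIntegral_mono measurable_const fun z hz => ?_
      exact ENNReal.ofReal_le_ofReal
        (Real.rpow_le_rpow_of_nonpos (by positivity) hz.1 (by linarith))
    refine h1.trans ?_
    rw [setLIntegral_const]
    calc ENNReal.ofReal (((2:ℝ)⁻¹ ^ (k+1)) ^ (-β)) * μ (A k)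
        ≤ ENNReal.ofReal (((2:ℝ)⁻¹ ^ (k+1)) ^ (-β)) * μ (closedBall (0:E) ((2:ℝ)⁻¹ ^ k)) :=
          mul_le_mul_right (measure_mono (hAsub k)) _
      _ = ENNReal.ofReal ((2:ℝ) ^ β * r ^ k) * μ (ball (0:E) 1) := by
          rw [μ.addHaar_closedBall _ (by positivity), ← mul_assoc,
            ← ENNReal.ofReal_mul (by positivity), hterm k]
  have hA0 : (∫⁻ z in ({0} : Set E), ENNReal.ofReal (‖z‖ ^ (-β)) ∂μ) = 0 :=
    setLIntegral_measure_zero _ _ (measure_singleton 0)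
  calc (∫⁻ z in ball (0 : E) 1, ENNReal.ofReal (‖z‖ ^ (-β)) ∂μ)
      ≤ ∫⁻ z in ({0} ∪ ⋃ k, A k : Set E), ENNReal.ofReal (‖z‖ ^ (-β)) ∂μ :=
        lintegral_mono_set hcover
    _ ≤ (∫⁻ z in ({0} : Set E), ENNReal.ofReal (‖z‖ ^ (-β)) ∂μ)
        + ∫⁻ z in (⋃ k, A k : Set E), ENNReal.ofReal (‖z‖ ^ (-β)) ∂μ :=
        lintegral_union_le _ _ _
    _ = ∫⁻ z in (⋃ k, A k : Set E), ENNReal.ofReal (‖z‖ ^ (-β)) ∂μ := by rw [hA0, zero_add]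
    _ ≤ ∑' k, ∫⁻ z in A k, ENNReal.ofReal (‖z‖ ^ (-β)) ∂μ := lintegral_iUnion_le _ _
    _ ≤ ∑' k, ENNReal.ofReal ((2:ℝ) ^ β * r ^ k) * μ (ball (0:E) 1) :=
        ENNReal.tsum_le_tsum hbound
    _ < ⊤ := by
        have hr0 : 0 ≤ r := by positivity
        have hrlt : r < 1 := by
          rw [hr, inv_pow, ← Real.rpow_natCast (2:ℝ) n]
          rw [mul_inv_lt_iff₀ (by positivity), one_mul]
          exact Real.rpow_lt_rpow_left_iff (by norm_num) |>.2 hβ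
        have heq : ∀ k : ℕ, ENNReal.ofReal ((2:ℝ) ^ β * r ^ k) * μ (ball (0:E) 1)
            = (ENNReal.ofReal ((2:ℝ)^β) * μ (ball (0:E) 1)) * (ENNReal.ofReal r) ^ k := by
          intro k
          rw [ENNReal.ofReal_mul (by positivity), ENNReal.ofReal_pow hr0]
          ring
        simp_rw [heq]
        rw [ENNReal.tsum_mul_left, ENNReal.tsum_geometric]
        refine ENNReal.mul_lt_top (ENNReal.mul_lt_top ENNReal.ofReal_lt_top
          measure_ball_lt_top) ?_
        exact ENNReal.inv_lt_top.2 (tsub_pos_iff_lt.2 (ENNReal.ofReal_lt_one.2 hrlt))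

end Aux

/-- Lemma A.3, first inequality: for `α > N` and `0 < β < N`, there is `C > 0` such that
whenever `|y−x|² + t² ≥ ρ²` and `t > 0`,
`∫_{ℝ^N} dz /((t+|z|)^α |y−z−x|^β) ≤ C ((1+|y−x|)^{−β} t^{−(α−N)} + (1+|y−x|)^{−(α+β−N)})`. -/
theorem stmt2 (N : ℕ) (hN : 1 ≤ N) (ρ α β : ℝ) (hρ : 0 < ρ) (hα : (N : ℝ) < α)
    (hβ0 : 0 < β) (hβ : β < N) :
    ∃ C : ℝ, 0 < C ∧ ∀ x y : EuclideanSpace ℝ (Fin N), ∀ t : ℝ, 0 < t →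
      ρ ^ 2 ≤ ‖y - x‖ ^ 2 + t ^ 2 →
      (∫ z : EuclideanSpace ℝ (Fin N), 1 / ((t + ‖z‖) ^ α * ‖y - z - x‖ ^ β)) ≤
        C * ((1 + ‖y - x‖) ^ (-β) * t ^ (-(α - (N : ℝ))) +
          (1 + ‖y - x‖) ^ (-(α + β - (N : ℝ)))) := by
  haveI : Nonempty (Fin N) := ⟨⟨0, hN⟩⟩
  have hfr : finrank ℝ (EuclideanSpace ℝ (Fin N)) = N := finrank_euclideanSpace_fin
  have hαpos : 0 < α := lt_of_le_of_lt (Nat.cast_nonneg N) hα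
  set K1 := ∫⁻ z : EuclideanSpace ℝ (Fin N) in ball 0 1,
      ENNReal.ofReal (‖z‖ ^ (-β)) with hK1def
  have hK1 : K1 < ⊤ := aux_ball_lt_top hβ0 (by rw [hfr]; exact_mod_cast hβ)
  set K2 := ∫⁻ z : EuclideanSpace ℝ (Fin N), ENNReal.ofReal ((1 + ‖z‖) ^ (-α)) with hK2def
  have hK2 : K2 < ⊤ := finite_integral_one_add_norm (by rw [hfr]; exact hα)
  set k1 := K1.toReal with hk1def
  set k2 := K2.toReal with hk2def
  have hk1 : 0 ≤ k1 := ENNReal.toReal_nonneg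
  have hk2 : 0 ≤ k2 := ENNReal.toReal_nonneg
  set c0 : ℝ := 1 + ρ⁻¹ with hc0def
  have hc0 : 0 < c0 := by rw [hc0def]; positivity
  set c1 : ℝ := (2*c0) ^ (α + β - (N:ℝ)) with hc1def
  have hc1 : 0 < c1 := Real.rpow_pos_of_pos (by linarith) _
  set c2 : ℝ := (2*c0) ^ β with hc2def
  have hc2 : 0 < c2 := Real.rpow_pos_of_pos (by linarith) _
  refine ⟨c1 * k1 + c2 * k2 + 1, by positivity, ?_⟩
  set C : ℝ := c1 * k1 + c2 * k2 + 1 with hCdef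
  have hC : 0 < C := by positivity
  have hCb1 : c1 * k1 ≤ C := by nlinarith
  have hCb2 : c2 * k2 ≤ C := by nlinarith
  intro x y t ht hρ2
  set w := y - x with hw
  set d := ‖w‖ with hd
  have hd0 : 0 ≤ d := norm_nonneg _
  have htd : ρ ≤ t + d := by nlinarith [hρ2, ht, hd0, hρ]
  set R := (t + d)/2 with hRdef
  have hR : 0 < R := by rw [hRdef]; linarith
  have h1d : 1 + d ≤ 2 * c0 * R := by
    have h1 : 1 ≤ (t + d)/ρ := (one_le_div hρ).2 htd
    have h2 : (1:ℝ) + d ≤ (t+d)/ρ + (t+d) := by linarith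
    calc (1:ℝ) + d ≤ (t+d)/ρ + (t+d) := h2
      _ = c0 * (t+d) := by rw [hc0def]; field_simp; ring
      _ = 2 * c0 * R := by rw [hRdef]; ring
  -- key real exponent bounds
  have hbase : (0:ℝ) < (1+d)/(2*c0) := by positivity
  have hbR : (1+d)/(2*c0) ≤ R := (div_le_iff₀ (by positivity)).2 (by linarith)
  have hRe1 : R ^ ((N:ℝ) - β - α) ≤ c1 * (1+d) ^ (-(α+β-(N:ℝ))) := by
    have he : ((N:ℝ) - β - α) = -(α+β-(N:ℝ)) := by ring
    rw [he]
    calc R ^ (-(α+β-(N:ℝ))) ≤ ((1+d)/(2*c0)) ^ (-(α+β-(N:ℝ))) :=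
          Real.rpow_le_rpow_of_nonpos hbase hbR (by simp; linarith)
      _ = (1+d) ^ (-(α+β-(N:ℝ))) / (2*c0) ^ (-(α+β-(N:ℝ))) :=
          Real.div_rpow (by linarith) (by linarith) _
      _ = c1 * (1+d) ^ (-(α+β-(N:ℝ))) := by
          rw [Real.rpow_neg (x := 2*c0) (by linarith), div_eq_mul_inv, inv_inv, hc1def]
          ring
  have hRe2 : R ^ (-β) ≤ c2 * (1+d) ^ (-β) := by
    calc R ^ (-β) ≤ ((1+d)/(2*c0)) ^ (-β) :=
          Real.rpow_le_rpow_of_nonpos hbase hbR (by linarith)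
      _ = (1+d) ^ (-β) / (2*c0) ^ (-β) := Real.div_rpow (by linarith) (by linarith) _
      _ = c2 * (1+d) ^ (-β) := by
          rw [Real.rpow_neg (x := 2*c0) (by linarith), div_eq_mul_inv, inv_inv, hc2def]
          ring
  set Hball := (ball (0 : EuclideanSpace ℝ (Fin N)) R).indicator
      (fun u => ENNReal.ofReal (‖u‖ ^ (-β))) with hHdef
  have hHmeas : Measurable Hball := by
    rw [hHdef]
    exact Measurable.indicator (by fun_prop) measurableSet_ball
  -- pointwise bound
  have hpt : ∀ z : EuclideanSpace ℝ (Fin N),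
      ENNReal.ofReal (1 / ((t + ‖z‖) ^ α * ‖y - z - x‖ ^ β)) ≤
        ENNReal.ofReal (R ^ (-α)) * Hball (z - w)
        + ENNReal.ofReal (R ^ (-β)) * ENNReal.ofReal ((t + ‖z‖) ^ (-α)) := by
    intro z
    have hyzx : ‖y - z - x‖ = ‖z - w‖ := by
      rw [show y - z - x = w - z by rw [hw]; abel, norm_sub_rev]
    rw [hyzx]
    have htz : (0:ℝ) < t + ‖z‖ := by have := norm_nonneg z; linarith
    by_cases hz : z - w ∈ ball (0 : EuclideanSpace ℝ (Fin N)) R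
    · rw [hHdef, indicator_of_mem hz]
      refine le_add_right ?_
      rw [← ENNReal.ofReal_mul (Real.rpow_nonneg hR.le _)]
      refine ENNReal.ofReal_le_ofReal ?_
      rcases eq_or_ne (z - w) 0 with h0 | h0
      · rw [h0]
        simp only [norm_zero, Real.zero_rpow hβ0.ne', mul_zero, div_zero]
        positivity
      · have hzw : 0 < ‖z - w‖ := norm_pos_iff.2 h0
        have h3 : ‖z - w‖ < R := mem_ball_zero_iff.1 hz
        have h1 : ‖w‖ ≤ ‖w - z‖ + ‖z‖ := by
          simpa using norm_add_le (w - z) z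
        have h2 : ‖w - z‖ = ‖z - w‖ := norm_sub_rev _ _
        have hRz : R ≤ t + ‖z‖ := by
          rw [hRdef]
          rw [h2] at h1
          rw [hd] at *
          linarith
        rw [one_div, mul_inv, Real.rpow_neg hR.le, Real.rpow_neg (norm_nonneg _)]
        gcongr
    · rw [hHdef, indicator_of_notMem hz, mul_zero, zero_add,
        ← ENNReal.ofReal_mul (Real.rpow_nonneg hR.le _)]
      refine ENNReal.ofReal_le_ofReal ?_
      have hz' : R ≤ ‖z - w‖ := not_lt.1 fun h => hz (mem_ball_zero_iff.2 h)
      rw [one_div, mul_inv, mul_comm, Real.rpow_neg hR.le, Real.rpow_neg htz.le]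
      gcongr
  -- scaling identities
  have hscale1 : (∫⁻ z : EuclideanSpace ℝ (Fin N), Hball (z - w))
      = ENNReal.ofReal (R ^ ((N:ℝ) - β)) * K1 := by
    rw [lintegral_sub_right_eq_self Hball w]
    have hcs := lintegral_comp_smul_aux (μ := volume) Hball hHmeas hR
    have hb : ∀ v : EuclideanSpace ℝ (Fin N), Hball (R • v)
        = ENNReal.ofReal (R ^ (-β)) * (ball (0 : EuclideanSpace ℝ (Fin N)) 1).indicator
            (fun u => ENNReal.ofReal (‖u‖ ^ (-β))) v := by
      intro v
      have hnorm : ‖R • v‖ = R * ‖v‖ := by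
        rw [norm_smul, Real.norm_eq_abs, abs_of_pos hR]
      by_cases hv : v ∈ ball (0 : EuclideanSpace ℝ (Fin N)) 1
      · have hv' : ‖v‖ < 1 := mem_ball_zero_iff.1 hv
        have hmem : R • v ∈ ball (0 : EuclideanSpace ℝ (Fin N)) R := by
          rw [mem_ball_zero_iff, hnorm]
          nlinarith [norm_nonneg v]
        rw [hHdef, indicator_of_mem hmem, indicator_of_mem hv, hnorm,
          Real.mul_rpow hR.le (norm_nonneg v),
          ENNReal.ofReal_mul (Real.rpow_nonneg hR.le _)]
      · have hv' : (1:ℝ) ≤ ‖v‖ := not_lt.1 fun h => hv (mem_ball_zero_iff.2 h)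
        have hmem : R • v ∉ ball (0 : EuclideanSpace ℝ (Fin N)) R := by
          rw [mem_ball_zero_iff, hnorm]
          intro hcon
          nlinarith
        rw [hHdef, indicator_of_notMem hmem, indicator_of_notMem hv, mul_zero]
    rw [hcs]
    simp_rw [hb]
    rw [lintegral_const_mul _ (Measurable.indicator (by fun_prop) measurableSet_ball),
      lintegral_indicator measurableSet_ball, ← hK1def, hfr, ← mul_assoc,
      ← ENNReal.ofReal_mul (by positivity), ← Real.rpow_natCast R N,
      ← Real.rpow_add hR, ← sub_eq_add_neg]
  have hscale2 : (∫⁻ z : EuclideanSpace ℝ (Fin N), ENNReal.ofReal ((t + ‖z‖) ^ (-α)))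
      = ENNReal.ofReal (t ^ ((N:ℝ) - α)) * K2 := by
    have hf : Measurable fun z : EuclideanSpace ℝ (Fin N) =>
        ENNReal.ofReal ((t + ‖z‖) ^ (-α)) := by fun_prop
    rw [lintegral_comp_smul_aux (μ := volume) _ hf ht]
    have hb : ∀ v : EuclideanSpace ℝ (Fin N), ENNReal.ofReal ((t + ‖t • v‖) ^ (-α))
        = ENNReal.ofReal (t ^ (-α)) * ENNReal.ofReal ((1 + ‖v‖) ^ (-α)) := by
      intro v
      have hnorm : ‖t • v‖ = t * ‖v‖ := by
        rw [norm_smul, Real.norm_eq_abs, abs_of_pos ht]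
      rw [hnorm, show t + t * ‖v‖ = t * (1 + ‖v‖) by ring,
        Real.mul_rpow ht.le (by positivity),
        ENNReal.ofReal_mul (Real.rpow_nonneg ht.le _)]
    simp_rw [hb]
    rw [lintegral_const_mul _ (by fun_prop), ← hK2def, hfr, ← mul_assoc,
      ← ENNReal.ofReal_mul (by positivity), ← Real.rpow_natCast t N,
      ← Real.rpow_add ht, ← sub_eq_add_neg]
  -- put everything together
  have hgmeas : Measurable fun z : EuclideanSpace ℝ (Fin N) =>
      1 / ((t + ‖z‖) ^ α * ‖y - z - x‖ ^ β) := by fun_prop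
  have hnonneg : 0 ≤ᵐ[(volume : Measure (EuclideanSpace ℝ (Fin N)))]
      fun z => 1 / ((t + ‖z‖) ^ α * ‖y - z - x‖ ^ β) :=
    Filter.Eventually.of_forall fun z => by positivity
  rw [integral_eq_lintegral_of_nonneg_ae hnonneg hgmeas.aestronglyMeasurable]
  have hP : (0:ℝ) ≤ (1+d) ^ (-(α+β-(N:ℝ))) := Real.rpow_nonneg (by linarith) _
  have hQ : (0:ℝ) ≤ (1+d) ^ (-β) * t ^ (-(α-(N:ℝ))) :=
    mul_nonneg (Real.rpow_nonneg (by linarith) _) (Real.rpow_nonneg ht.le _)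
  refine ENNReal.toReal_le_of_le_ofReal (mul_nonneg hC.le (add_nonneg hQ hP)) ?_
  have hHm2 : Measurable fun z : EuclideanSpace ℝ (Fin N) => Hball (z - w) :=
    hHmeas.comp (measurable_id.sub measurable_const)
  calc (∫⁻ z : EuclideanSpace ℝ (Fin N),
        ENNReal.ofReal (1 / ((t + ‖z‖) ^ α * ‖y - z - x‖ ^ β)))
      ≤ ∫⁻ z : EuclideanSpace ℝ (Fin N),
          (ENNReal.ofReal (R ^ (-α)) * Hball (z - w)
          + ENNReal.ofReal (R ^ (-β)) * ENNReal.ofReal ((t + ‖z‖) ^ (-α))) :=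
        lintegral_mono hpt
    _ = ENNReal.ofReal (R ^ (-α)) * (∫⁻ z : EuclideanSpace ℝ (Fin N), Hball (z - w))
        + ENNReal.ofReal (R ^ (-β))
          * ∫⁻ z : EuclideanSpace ℝ (Fin N), ENNReal.ofReal ((t + ‖z‖) ^ (-α)) := by
        rw [lintegral_add_left (hHm2.const_mul _), lintegral_const_mul _ hHm2,
          lintegral_const_mul _ (by fun_prop)]
    _ = ENNReal.ofReal (R ^ ((N:ℝ) - β - α)) * K1
        + ENNReal.ofReal (R ^ (-β)) * (ENNReal.ofReal (t ^ ((N:ℝ) - α)) * K2) := by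
        rw [hscale1, hscale2, ← mul_assoc, ← ENNReal.ofReal_mul (Real.rpow_nonneg hR.le _),
          ← Real.rpow_add hR, show -α + ((N:ℝ) - β) = (N:ℝ) - β - α by ring]
    _ ≤ ENNReal.ofReal (c1 * (1+d) ^ (-(α+β-(N:ℝ)))) * K1
        + ENNReal.ofReal (c2 * (1+d) ^ (-β)) * (ENNReal.ofReal (t ^ ((N:ℝ) - α)) * K2) :=
        add_le_add (mul_le_mul_left (ENNReal.ofReal_le_ofReal hRe1) _)
          (mul_le_mul_left (ENNReal.ofReal_le_ofReal hRe2) _)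
    _ ≤ ENNReal.ofReal (C * ((1+d) ^ (-β) * t ^ (-(α-(N:ℝ))) + (1+d) ^ (-(α+β-(N:ℝ))))) := by
        rw [show K1 = ENNReal.ofReal k1 by rw [hk1def, ENNReal.ofReal_toReal hK1.ne],
          show K2 = ENNReal.ofReal k2 by rw [hk2def, ENNReal.ofReal_toReal hK2.ne],
          show ((N:ℝ) - α) = -(α - (N:ℝ)) by ring,
          ← ENNReal.ofReal_mul (by positivity),
          ← ENNReal.ofReal_mul (Real.rpow_nonneg ht.le _),
          ← ENNReal.ofReal_mul (by positivity),
          ← ENNReal.ofReal_add (by positivity) (by positivity)]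
        refine ENNReal.ofReal_le_ofReal ?_
        have e1 := mul_le_mul_of_nonneg_right hCb1 hP
        have e2 := mul_le_mul_of_nonneg_right hCb2 hQ
        nlinarith [e1, e2, hP, hQ, hk1, hk2, hc1.le, hc2.le,
          Real.rpow_nonneg (show (0:ℝ) ≤ 1 + d by linarith) (-β),
          Real.rpow_nonneg ht.le (-(α-(N:ℝ)))]
end
end

section
/- Let N ≥ 1 be an integer and let ρ > θ > 0 and α, β be real constants with α > N and 0 < β < N. Then there exists a constant C = C(N, α, β, ρ) > 0, independent of θ, such that for all x, y ∈ ℝ^N and all t > 0 satisfying |y−x|² + t² ≥ ρ², one has ∫_{ℝ^N \ B_θ(0)} 1/((t+|z|)^α · |y−z−x|^β) dz ≤ C · (1+|y−x|)^{−β} · θ^{−(α−N)}. -/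
open MeasureTheory Set

noncomputable section

section Stmt3Aux

local notation "Esp" N => EuclideanSpace ℝ (Fin N)

lemma stmt3_aux_nontrivial (N : ℕ) (hN : 1 ≤ N) : Nontrivial (EuclideanSpace ℝ (Fin N)) := by
  apply Module.nontrivial_of_finrank_pos (R := ℝ)
  rw [finrank_euclideanSpace_fin]
  exact hN

/-- Integrability of `‖z‖ ^ (-α)` outside a ball of radius `θ > 0`, for `α > N`. -/
lemma stmt3_aux_int1 (N : ℕ) (α : ℝ) (hα : (N : ℝ) < α) {θ : ℝ} (hθ : 0 < θ) :
    IntegrableOn (fun z : EuclideanSpace ℝ (Fin N) => ‖z‖ ^ (-α))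
      {z : EuclideanSpace ℝ (Fin N) | θ ≤ ‖z‖} := by
  have hα0 : 0 < α := lt_of_le_of_lt (Nat.cast_nonneg N) hα
  have hfin : (Module.finrank ℝ (EuclideanSpace ℝ (Fin N)) : ℝ) < α := by
    rw [finrank_euclideanSpace_fin]; exact hα
  have hS : MeasurableSet {z : EuclideanSpace ℝ (Fin N) | θ ≤ ‖z‖} :=
    measurableSet_le measurable_const measurable_norm
  have hint : Integrable (fun z : EuclideanSpace ℝ (Fin N) =>
      (θ / (1 + θ)) ^ (-α) * (1 + ‖z‖) ^ (-α)) volume :=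
    (integrable_one_add_norm hfin).const_mul _
  have hmeas : Measurable (fun z : EuclideanSpace ℝ (Fin N) => ‖z‖ ^ (-α)) := by fun_prop
  refine (hint.integrableOn).mono' ?_ ?_
  · exact hmeas.aestronglyMeasurable
  · rw [ae_restrict_iff' hS]
    refine ae_of_all _ fun z hz => ?_
    have hz' : θ ≤ ‖z‖ := hz
    have hz0 : 0 < ‖z‖ := lt_of_lt_of_le hθ hz'
    rw [Real.norm_of_nonneg (Real.rpow_nonneg (norm_nonneg z) _)]
    rw [← Real.mul_rpow (by positivity) (by positivity)]
    apply Real.rpow_le_rpow_of_nonpos (by positivity) ?_ (by linarith)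
    rw [div_mul_eq_mul_div, div_le_iff₀ (by positivity)]
    nlinarith [norm_nonneg z]

/-- Integrability of `‖w‖ ^ (-β)` on a closed ball, for `0 < β < N`. -/
lemma stmt3_aux_int2 (N : ℕ) (β : ℝ) (hβ0 : 0 < β) (hβN : β < N) (r₁ : ℝ) :
    IntegrableOn (fun w : EuclideanSpace ℝ (Fin N) => ‖w‖ ^ (-β))
      (Metric.closedBall (0 : EuclideanSpace ℝ (Fin N)) r₁) := by
  have hmeas : Measurable (fun w : EuclideanSpace ℝ (Fin N) => ‖w‖ ^ (-β)) := by fun_prop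
  have h0 : ∀ w : EuclideanSpace ℝ (Fin N), 0 ≤ ‖w‖ ^ (-β) :=
    fun w => Real.rpow_nonneg (norm_nonneg w) _
  constructor
  · exact hmeas.aestronglyMeasurable
  · have hnn : (∫⁻ w in Metric.closedBall (0 : EuclideanSpace ℝ (Fin N)) r₁, ‖(‖w‖ ^ (-β))‖ₑ)
        = ∫⁻ w in Metric.closedBall (0 : EuclideanSpace ℝ (Fin N)) r₁,
            ENNReal.ofReal (‖w‖ ^ (-β)) :=
      lintegral_enorm_of_nonneg fun w => h0 w
    rw [HasFiniteIntegral, hnn,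
      lintegral_eq_lintegral_meas_le _ (ae_of_all _ h0) hmeas.aemeasurable]
    set μ := volume.restrict (Metric.closedBall (0 : EuclideanSpace ℝ (Fin N)) r₁) with hμ
    have hsub : ∀ u : ℝ, 0 < u →
        {w : EuclideanSpace ℝ (Fin N) | u ≤ ‖w‖ ^ (-β)} ⊆
          Metric.closedBall 0 (u ^ (-β)⁻¹) := by
      intro u hu w hw
      have hw' : u ≤ ‖w‖ ^ (-β) := hw
      have hw0 : 0 < ‖w‖ := by
        rcases eq_or_lt_of_le (norm_nonneg w) with h | h
        · exfalso
          rw [← h, Real.zero_rpow (by linarith : -β ≠ 0)] at hw'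
          linarith
        · exact h
      rw [mem_closedBall_zero_iff]
      exact (Real.le_rpow_inv_iff_of_neg hw0 hu (by linarith)).mpr hw'
    have hmble : ∀ u : ℝ, MeasurableSet {w : EuclideanSpace ℝ (Fin N) | u ≤ ‖w‖ ^ (-β)} :=
      fun u => measurableSet_le measurable_const hmeas
    calc
      ∫⁻ u in Ioi (0:ℝ), μ {w | u ≤ ‖w‖ ^ (-β)}
          ≤ ∫⁻ u in Ioc (0:ℝ) 1 ∪ Ioi 1, μ {w | u ≤ ‖w‖ ^ (-β)} :=
        lintegral_mono_set Ioi_subset_Ioc_union_Ioi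
      _ ≤ (∫⁻ u in Ioc (0:ℝ) 1, μ {w | u ≤ ‖w‖ ^ (-β)})
            + ∫⁻ u in Ioi (1:ℝ), μ {w | u ≤ ‖w‖ ^ (-β)} := lintegral_union_le _ _ _
      _ < ⊤ := by
        refine ENNReal.add_lt_top.2 ⟨?_, ?_⟩
        · calc
            ∫⁻ u in Ioc (0:ℝ) 1, μ {w | u ≤ ‖w‖ ^ (-β)}
                ≤ ∫⁻ _ in Ioc (0:ℝ) 1,
                    volume (Metric.closedBall (0 : EuclideanSpace ℝ (Fin N)) r₁) :=
              lintegral_mono fun u => le_trans (measure_mono (subset_univ _))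
                (le_of_eq (Measure.restrict_apply_univ _))
            _ < ⊤ := by
              rw [setLIntegral_const]
              exact ENNReal.mul_lt_top measure_closedBall_lt_top (by simp)
        · have h2 : ∀ u ∈ Ioi (1:ℝ), μ {w | u ≤ ‖w‖ ^ (-β)} ≤
              ENNReal.ofReal (u ^ ((-β)⁻¹ * N)) *
                volume (Metric.ball (0 : EuclideanSpace ℝ (Fin N)) 1) := by
            intro u hu
            have hu0 : (0:ℝ) < u := lt_trans one_pos hu
            have hr0 : (0:ℝ) ≤ u ^ (-β)⁻¹ := Real.rpow_nonneg hu0.le _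
            calc
              μ {w | u ≤ ‖w‖ ^ (-β)}
                  ≤ volume {w : EuclideanSpace ℝ (Fin N) | u ≤ ‖w‖ ^ (-β)} := by
                rw [hμ, Measure.restrict_apply (hmble u)]
                exact measure_mono inter_subset_left
              _ ≤ volume (Metric.closedBall (0 : EuclideanSpace ℝ (Fin N)) (u ^ (-β)⁻¹)) :=
                measure_mono (hsub u hu0)
              _ = ENNReal.ofReal (u ^ ((-β)⁻¹ * N)) *
                    volume (Metric.ball (0 : EuclideanSpace ℝ (Fin N)) 1) := by
                rw [Measure.addHaar_closedBall _ _ hr0, finrank_euclideanSpace_fin,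
                  ← Real.rpow_natCast (u ^ (-β)⁻¹) N, ← Real.rpow_mul hu0.le]
          calc
            ∫⁻ u in Ioi (1:ℝ), μ {w | u ≤ ‖w‖ ^ (-β)}
                ≤ ∫⁻ u in Ioi (1:ℝ), ENNReal.ofReal (u ^ ((-β)⁻¹ * N)) *
                    volume (Metric.ball (0 : EuclideanSpace ℝ (Fin N)) 1) :=
              setLIntegral_mono' measurableSet_Ioi h2
            _ = (∫⁻ u in Ioi (1:ℝ), ENNReal.ofReal (u ^ ((-β)⁻¹ * N))) *
                    volume (Metric.ball (0 : EuclideanSpace ℝ (Fin N)) 1) :=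
              lintegral_mul_const' _ _ measure_ball_lt_top.ne
            _ < ⊤ := by
              refine ENNReal.mul_lt_top ?_ measure_ball_lt_top
              have hlt : (-β)⁻¹ * N < -1 := by
                have h1 : (1:ℝ) < β⁻¹ * N := by
                  rw [← div_eq_inv_mul]
                  exact (one_lt_div hβ0).2 hβN
                have h2 : (-β)⁻¹ = -β⁻¹ := by rw [inv_neg]
                rw [h2]; nlinarith
              exact (integrableOn_Ioi_rpow_of_lt hlt one_pos).setLIntegral_lt_top

/-- Value of the integral of `‖z‖ ^ (-α)` outside the ball of radius `θ`. -/
lemma stmt3_aux_val1 (N : ℕ) (hN : 1 ≤ N) (α : ℝ) (hα : (N : ℝ) < α) {θ : ℝ} (hθ : 0 < θ) :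
    ∫ z in {z : EuclideanSpace ℝ (Fin N) | θ ≤ ‖z‖}, ‖z‖ ^ (-α)
      = (N * (volume (Metric.ball (0 : EuclideanSpace ℝ (Fin N)) 1)).toReal / (α - N))
          * θ ^ ((N : ℝ) - α) := by
  haveI := stmt3_aux_nontrivial N hN
  have hS : MeasurableSet {z : EuclideanSpace ℝ (Fin N) | θ ≤ ‖z‖} :=
    measurableSet_le measurable_const measurable_norm
  have hind : ∀ z : EuclideanSpace ℝ (Fin N),
      indicator {z : EuclideanSpace ℝ (Fin N) | θ ≤ ‖z‖} (fun z => ‖z‖ ^ (-α)) z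
        = (fun r : ℝ => indicator (Ici θ) (fun r : ℝ => r ^ (-α)) r) ‖z‖ := by
    intro z
    by_cases hz : θ ≤ ‖z‖ <;> simp [indicator, hz]
  rw [← integral_indicator hS]
  rw [show (fun z : EuclideanSpace ℝ (Fin N) =>
      indicator {z : EuclideanSpace ℝ (Fin N) | θ ≤ ‖z‖} (fun z => ‖z‖ ^ (-α)) z)
    = fun z : EuclideanSpace ℝ (Fin N) =>
        (fun r : ℝ => indicator (Ici θ) (fun r : ℝ => r ^ (-α)) r) ‖z‖ from funext hind]
  rw [integral_fun_norm_addHaar volume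
    (fun r : ℝ => indicator (Ici θ) (fun r : ℝ => r ^ (-α)) r)]
  rw [finrank_euclideanSpace_fin]
  have hsm : ∀ y : ℝ, y ^ (N - 1) • indicator (Ici θ) (fun r : ℝ => r ^ (-α)) y
      = indicator (Ici θ) (fun r : ℝ => r ^ (N - 1) * r ^ (-α)) y := by
    intro y
    by_cases hy : y ∈ Ici θ <;> simp [indicator, hy]
  rw [show (fun y : ℝ => y ^ (N - 1) • indicator (Ici θ) (fun r : ℝ => r ^ (-α)) y)
    = fun y : ℝ => indicator (Ici θ) (fun r : ℝ => r ^ (N - 1) * r ^ (-α)) y from funext hsm]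
  -- reduce to an integral over `Ioi θ`
  rw [setIntegral_indicator measurableSet_Ici]
  have hinter : Ioi (0:ℝ) ∩ Ici θ = Ici θ :=
    inter_eq_self_of_subset_right (fun x hx => lt_of_lt_of_le hθ hx)
  rw [hinter, integral_Ici_eq_integral_Ioi]
  have hcongr : ∫ y in Ioi θ, y ^ (N - 1) * y ^ (-α)
      = ∫ y in Ioi θ, y ^ ((N : ℝ) - 1 - α) := by
    refine setIntegral_congr_fun measurableSet_Ioi fun y hy => ?_
    have hy0 : 0 < y := lt_trans hθ hy
    rw [← Real.rpow_natCast y (N - 1), ← Real.rpow_add hy0]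
    congr 1
    rw [Nat.cast_sub hN]
    push_cast
    ring
  rw [hcongr, integral_Ioi_rpow_of_lt (by linarith) hθ]
  have hNα : (N : ℝ) - 1 - α + 1 = (N : ℝ) - α := by ring
  rw [hNα, nsmul_eq_mul, smul_eq_mul]
  have hden : (N : ℝ) - α ≠ 0 := by linarith
  have hden' : α - (N : ℝ) ≠ 0 := by linarith
  have key : -θ ^ ((N:ℝ) - α) / ((N:ℝ) - α) = θ ^ ((N:ℝ) - α) / (α - (N:ℝ)) := by
    rw [div_eq_div_iff hden hden']
    ring
  rw [key]
  rw [measureReal_def]; ring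

/-- Value of the integral of `‖w‖ ^ (-β)` on the closed ball of radius `r₀`. -/
lemma stmt3_aux_val2 (N : ℕ) (hN : 1 ≤ N) (β : ℝ) (hβ0 : 0 < β) (hβN : β < N)
    {r₀ : ℝ} (hr₀ : 0 < r₀) :
    ∫ w in Metric.closedBall (0 : EuclideanSpace ℝ (Fin N)) r₀, ‖w‖ ^ (-β)
      = (N * (volume (Metric.ball (0 : EuclideanSpace ℝ (Fin N)) 1)).toReal / ((N : ℝ) - β))
          * r₀ ^ ((N : ℝ) - β) := by
  haveI := stmt3_aux_nontrivial N hN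
  have hind : ∀ w : EuclideanSpace ℝ (Fin N),
      indicator (Metric.closedBall (0 : EuclideanSpace ℝ (Fin N)) r₀)
          (fun w => ‖w‖ ^ (-β)) w
        = (fun r : ℝ => indicator (Iic r₀) (fun r : ℝ => r ^ (-β)) r) ‖w‖ := by
    intro w
    by_cases hw : ‖w‖ ≤ r₀ <;>
      simp [indicator, hw, Metric.mem_closedBall, dist_zero_right]
  rw [← integral_indicator measurableSet_closedBall]
  rw [show (fun w : EuclideanSpace ℝ (Fin N) =>
      indicator (Metric.closedBall (0 : EuclideanSpace ℝ (Fin N)) r₀)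
        (fun w => ‖w‖ ^ (-β)) w)
    = fun w : EuclideanSpace ℝ (Fin N) =>
        (fun r : ℝ => indicator (Iic r₀) (fun r : ℝ => r ^ (-β)) r) ‖w‖ from funext hind]
  rw [integral_fun_norm_addHaar volume
    (fun r : ℝ => indicator (Iic r₀) (fun r : ℝ => r ^ (-β)) r)]
  rw [finrank_euclideanSpace_fin]
  have hsm : ∀ y : ℝ, y ^ (N - 1) • indicator (Iic r₀) (fun r : ℝ => r ^ (-β)) y
      = indicator (Iic r₀) (fun r : ℝ => r ^ (N - 1) * r ^ (-β)) y := by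
    intro y
    by_cases hy : y ∈ Iic r₀ <;> simp [indicator, hy]
  rw [show (fun y : ℝ => y ^ (N - 1) • indicator (Iic r₀) (fun r : ℝ => r ^ (-β)) y)
    = fun y : ℝ => indicator (Iic r₀) (fun r : ℝ => r ^ (N - 1) * r ^ (-β)) y from funext hsm]
  rw [setIntegral_indicator measurableSet_Iic]
  have hinter : Ioi (0:ℝ) ∩ Iic r₀ = Ioc 0 r₀ := Ioi_inter_Iic
  rw [hinter]
  have hcongr : ∫ y in Ioc (0:ℝ) r₀, y ^ (N - 1) * y ^ (-β)
      = ∫ y in Ioc (0:ℝ) r₀, y ^ ((N : ℝ) - 1 - β) := by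
    refine setIntegral_congr_fun measurableSet_Ioc fun y hy => ?_
    have hy0 : 0 < y := hy.1
    rw [← Real.rpow_natCast y (N - 1), ← Real.rpow_add hy0]
    congr 1
    rw [Nat.cast_sub hN]
    push_cast
    ring
  rw [hcongr, ← intervalIntegral.integral_of_le hr₀.le,
    integral_rpow (Or.inl (by linarith : (-1:ℝ) < (N : ℝ) - 1 - β))]
  have h1 : (N : ℝ) - 1 - β + 1 = (N : ℝ) - β := by ring
  rw [h1, Real.zero_rpow (by linarith : (N : ℝ) - β ≠ 0)]
  rw [nsmul_eq_mul, smul_eq_mul, sub_zero]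
  rw [measureReal_def]; ring


lemma stmt3_c0_bound1 (ρ R t nz : ℝ) (hρ : 0 < ρ) (hR0 : 0 ≤ R) (ht : ρ / 2 ≤ t)
    (hnz : (R - 1) / 2 ≤ nz) (hnz0 : 0 ≤ nz) : min ρ 1 / 6 * (1 + R) ≤ t + nz := by
  have hm1 : min ρ 1 ≤ ρ := min_le_left _ _
  have hm2 : min ρ 1 ≤ 1 := min_le_right _ _
  have hm0 : 0 < min ρ 1 := lt_min hρ one_pos
  rcases le_or_gt R 2 with hR2 | hR2
  · have h1 : min ρ 1 * (1 + R) ≤ min ρ 1 * 3 :=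
      mul_le_mul_of_nonneg_left (by linarith) hm0.le
    linarith
  · have h1 : min ρ 1 * (1 + R) ≤ 1 * (1 + R) :=
      mul_le_mul_of_nonneg_right hm2 (by linarith)
    linarith

lemma stmt3_c0_bound2 (ρ R t nz : ℝ) (hρ : 0 < ρ) (hR : ρ / 2 ≤ R) (hnz : R / 2 ≤ nz)
    (ht : 0 ≤ t) : min ρ 1 / 6 * (1 + R) ≤ t + nz := by
  have hm1 : min ρ 1 ≤ ρ := min_le_left _ _
  have hm2 : min ρ 1 ≤ 1 := min_le_right _ _
  have hm0 : 0 < min ρ 1 := lt_min hρ one_pos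
  have hR0 : 0 ≤ R := by linarith
  have hexp : min ρ 1 * (1 + R) = min ρ 1 + min ρ 1 * R := by ring
  have h1 : min ρ 1 * R ≤ 1 * R := mul_le_mul_of_nonneg_right hm2 hR0
  linarith

lemma stmt3_R_lower (ρ R t : ℝ) (hρ : 0 < ρ) (hR0 : 0 ≤ R) (ht0 : 0 < t) (ht : t < ρ / 2)
    (hcon : ρ ^ 2 ≤ R ^ 2 + t ^ 2) : ρ / 2 ≤ R := by
  by_contra h
  push_neg at h
  have h1 : R ^ 2 ≤ (ρ / 2) ^ 2 := by nlinarith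
  have h2 : t ^ 2 ≤ (ρ / 2) ^ 2 := by nlinarith
  nlinarith

lemma stmt3_key_div (ρ R : ℝ) (hρ : 0 < ρ) (hR : ρ / 2 ≤ R) :
    (1 + R) / (2 + 4 / ρ) ≤ R / 2 := by
  have hq : (0 : ℝ) < 2 + 4 / ρ := by positivity
  rw [div_le_div_iff₀ hq two_pos]
  have h11 : 4 / ρ * (ρ / 2) = 2 := by field_simp; norm_num
  have hx : (2:ℝ) ≤ 4 / ρ * R := by
    calc (2:ℝ) = 4 / ρ * (ρ / 2) := h11.symm
      _ ≤ 4 / ρ * R := mul_le_mul_of_nonneg_left hR (by positivity)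
  nlinarith

end Stmt3Aux

set_option maxHeartbeats 1000000 in
/-- Lemma A.3, second inequality: for `ρ > θ > 0`, `α > N` and `0 < β < N`, there is
`C > 0` independent of `θ` such that whenever `|y−x|² + t² ≥ ρ²` and `t > 0`,
`∫_{ℝ^N ∖ B_θ(0)} dz /((t+|z|)^α |y−z−x|^β) ≤ C (1+|y−x|)^{−β} θ^{−(α−N)}`. -/
theorem stmt3 (N : ℕ) (hN : 1 ≤ N) (ρ α β : ℝ) (hρ : 0 < ρ) (hα : (N : ℝ) < α)
    (hβ0 : 0 < β) (hβ : β < N) :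
    ∃ C : ℝ, 0 < C ∧ ∀ θ : ℝ, 0 < θ → θ < ρ →
      ∀ x y : EuclideanSpace ℝ (Fin N), ∀ t : ℝ, 0 < t →
      ρ ^ 2 ≤ ‖y - x‖ ^ 2 + t ^ 2 →
      (∫ z in (Metric.closedBall (0 : EuclideanSpace ℝ (Fin N)) θ)ᶜ,
          1 / ((t + ‖z‖) ^ α * ‖y - z - x‖ ^ β)) ≤
        C * (1 + ‖y - x‖) ^ (-β) * θ ^ (-(α - (N : ℝ))) := by
  have hN0 : (0:ℝ) < N := by exact_mod_cast hN
  have hα0 : 0 < α := lt_trans hN0 hα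
  set vB := (volume (Metric.ball (0 : EuclideanSpace ℝ (Fin N)) 1)).toReal with hvB
  have hvB0 : 0 ≤ vB := ENNReal.toReal_nonneg
  set c₀ : ℝ := min ρ 1 / 6 with hc₀def
  have hc₀ : 0 < c₀ := by
    have : 0 < min ρ 1 := lt_min hρ one_pos
    positivity
  set K₁ : ℝ := N * vB / (α - N) with hK₁def
  have hK₁0 : 0 ≤ K₁ := by
    apply div_nonneg (by positivity) (by linarith)
  set K₂ : ℝ := N * vB / ((N : ℝ) - β) with hK₂def
  have hK₂0 : 0 ≤ K₂ := by
    apply div_nonneg (by positivity) (by linarith)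
  set A₁ : ℝ := ((2:ℝ) ^ β + (2 + 4 / ρ) ^ β) * K₁ with hA₁def
  set A₂ : ℝ := c₀ ^ (-(N:ℝ)) * (2:ℝ) ^ (β - N) * K₂ with hA₂def
  have hA₁0 : 0 ≤ A₁ := by
    apply mul_nonneg _ hK₁0
    have := Real.rpow_nonneg (le_of_lt two_pos) β
    have := Real.rpow_nonneg (by positivity : (0:ℝ) ≤ 2 + 4 / ρ) β
    linarith
  have hA₂0 : 0 ≤ A₂ := by
    apply mul_nonneg (mul_nonneg (Real.rpow_nonneg hc₀.le _) (Real.rpow_nonneg (by norm_num) _)) hK₂0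
  refine ⟨A₁ + A₂ + 1, by linarith, ?_⟩
  intro θ hθ hθρ x y t ht hcon
  set a : EuclideanSpace ℝ (Fin N) := y - x with ha
  set R : ℝ := ‖a‖ with hR
  have hR0 : 0 ≤ R := norm_nonneg a
  have h1R : (0:ℝ) < 1 + R := by linarith
  set r₀ : ℝ := (1 + R) / 2 with hr₀def
  have hr₀ : 0 < r₀ := by positivity
  set S₁ : Set (EuclideanSpace ℝ (Fin N)) := {z | θ ≤ ‖z‖} with hS₁def
  set S₂ : Set (EuclideanSpace ℝ (Fin N)) := {z | ‖a - z‖ ≤ r₀} with hS₂def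
  have hS₁ : MeasurableSet S₁ := measurableSet_le measurable_const measurable_norm
  have hS₂ : MeasurableSet S₂ :=
    measurableSet_le (measurable_const.sub measurable_id).norm measurable_const
  set M₁ : ℝ := ((2:ℝ) ^ β + (2 + 4 / ρ) ^ β) * (1 + R) ^ (-β) with hM₁def
  set M₂ : ℝ := θ ^ (-(α - (N:ℝ))) * c₀ ^ (-(N:ℝ)) * (1 + R) ^ (-(N:ℝ)) with hM₂def
  have hM₁0 : 0 ≤ M₁ := by
    apply mul_nonneg _ (Real.rpow_nonneg h1R.le _)
    have := Real.rpow_nonneg (le_of_lt two_pos) β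
    have := Real.rpow_nonneg (by positivity : (0:ℝ) ≤ 2 + 4 / ρ) β
    linarith
  have hM₂0 : 0 ≤ M₂ := by
    apply mul_nonneg (mul_nonneg (Real.rpow_nonneg hθ.le _) (Real.rpow_nonneg hc₀.le _))
      (Real.rpow_nonneg h1R.le _)
  set g : EuclideanSpace ℝ (Fin N) → ℝ := fun z =>
    M₁ * indicator S₁ (fun z => ‖z‖ ^ (-α)) z
      + M₂ * indicator S₂ (fun z => ‖a - z‖ ^ (-β)) z with hgdef
  have hg0 : ∀ z, 0 ≤ g z := by
    intro z
    apply add_nonneg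
    · exact mul_nonneg hM₁0 (indicator_nonneg (fun z _ => Real.rpow_nonneg (norm_nonneg z) _) z)
    · exact mul_nonneg hM₂0 (indicator_nonneg (fun z _ => Real.rpow_nonneg (norm_nonneg _) _) z)
  -- integrability of the two pieces
  have hI₁ : Integrable (indicator S₁ (fun z : EuclideanSpace ℝ (Fin N) => ‖z‖ ^ (-α))) volume :=
    (integrable_indicator_iff hS₁).2 (stmt3_aux_int1 N α hα hθ)
  have hGint : Integrable (indicator (Metric.closedBall (0 : EuclideanSpace ℝ (Fin N)) r₀)
      (fun w : EuclideanSpace ℝ (Fin N) => ‖w‖ ^ (-β))) volume :=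
    (integrable_indicator_iff measurableSet_closedBall).2 (stmt3_aux_int2 N β hβ0 hβ r₀)
  have hfeq : indicator S₂ (fun z : EuclideanSpace ℝ (Fin N) => ‖a - z‖ ^ (-β))
      = fun z => indicator (Metric.closedBall (0 : EuclideanSpace ℝ (Fin N)) r₀)
          (fun w => ‖w‖ ^ (-β)) (a - z) := by
    funext z
    by_cases hz : ‖a - z‖ ≤ r₀
    · rw [indicator_of_mem (by exact hz : z ∈ S₂),
        indicator_of_mem (mem_closedBall_zero_iff.mpr hz)]
    · rw [indicator_of_notMem (by exact hz : z ∉ S₂),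
        indicator_of_notMem (fun h => hz (mem_closedBall_zero_iff.mp h))]
  have hI₂ : Integrable (indicator S₂
      (fun z : EuclideanSpace ℝ (Fin N) => ‖a - z‖ ^ (-β))) volume := by
    rw [hfeq]
    exact hGint.comp_sub_left a
  have hgInt : Integrable g volume := (hI₁.const_mul M₁).add (hI₂.const_mul M₂)
  -- the pointwise estimate
  have hptwise : ∀ z ∈ (Metric.closedBall (0 : EuclideanSpace ℝ (Fin N)) θ)ᶜ,
      1 / ((t + ‖z‖) ^ α * ‖a - z‖ ^ β) ≤ g z := by
    intro z hzD
    have hznorm : θ < ‖z‖ := by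
      simpa [Metric.mem_closedBall, dist_zero_right] using hzD
    set nz : ℝ := ‖z‖ with hnz
    set na : ℝ := ‖a - z‖ with hna
    have hna0 : 0 ≤ na := norm_nonneg _
    have hnz0 : 0 < nz := lt_trans hθ hznorm
    have hs0 : 0 < t + nz := by linarith
    have hθs : θ ≤ t + nz := by linarith
    have hRana : R ≤ na + nz := by
      calc R = ‖(a - z) + z‖ := by rw [sub_add_cancel]
        _ ≤ na + nz := norm_add_le _ _
    rcases eq_or_lt_of_le hna0 with hna_eq | hna_pos
    · rw [← hna_eq, Real.zero_rpow (ne_of_gt hβ0), mul_zero, div_zero]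
      exact hg0 z
    · -- rewrite the LHS as a product of rpow's
      rw [one_div, mul_inv, ← Real.rpow_neg hs0.le, ← Real.rpow_neg hna0]
      -- helper for the "G1" branches
      have hG1 : ∀ κ : ℝ, 0 ≤ κ → κ ≤ (2:ℝ) ^ β + (2 + 4 / ρ) ^ β →
          na ^ (-β) ≤ κ * (1 + R) ^ (-β) →
          (t + nz) ^ (-α) * na ^ (-β) ≤ g z := by
        intro κ hκ0 hκle hbound
        have h1 : (t + nz) ^ (-α) ≤ nz ^ (-α) :=
          Real.rpow_le_rpow_of_nonpos hnz0 (by linarith) (by linarith)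
        have h2 : (t + nz) ^ (-α) * na ^ (-β) ≤ nz ^ (-α) * (κ * (1 + R) ^ (-β)) := by
          apply mul_le_mul h1 hbound (Real.rpow_nonneg hna0 _) (Real.rpow_nonneg hnz0.le _)
        have h3 : κ * (1 + R) ^ (-β) ≤ M₁ := by
          rw [hM₁def]
          apply mul_le_mul_of_nonneg_right hκle (Real.rpow_nonneg h1R.le _)
        have h4 : nz ^ (-α) * (κ * (1 + R) ^ (-β)) ≤ M₁ * nz ^ (-α) := by
          rw [mul_comm]
          apply mul_le_mul_of_nonneg_right h3 (Real.rpow_nonneg hnz0.le _)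
        have hmem : z ∈ S₁ := le_of_lt hznorm
        have hgz : M₁ * nz ^ (-α) ≤ g z := by
          rw [hgdef]
          simp only
          rw [indicator_of_mem hmem]
          have : 0 ≤ M₂ * indicator S₂ (fun z => ‖a - z‖ ^ (-β)) z :=
            mul_nonneg hM₂0 (indicator_nonneg (fun z _ => Real.rpow_nonneg (norm_nonneg _) _) z)
          linarith
        linarith
      -- helper for the "G2" branch
      have hG2 : c₀ * (1 + R) ≤ t + nz → na ≤ r₀ → (t + nz) ^ (-α) * na ^ (-β) ≤ g z := by
        intro hc hna_le
        have hsplit : (t + nz) ^ (-α)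
            = (t + nz) ^ (-(α - (N:ℝ))) * (t + nz) ^ (-(N:ℝ)) := by
          rw [← Real.rpow_add hs0]
          congr 1
          ring
        have hb1 : (t + nz) ^ (-(α - (N:ℝ))) ≤ θ ^ (-(α - (N:ℝ))) :=
          Real.rpow_le_rpow_of_nonpos hθ hθs (by linarith)
        have hb2 : (t + nz) ^ (-(N:ℝ)) ≤ c₀ ^ (-(N:ℝ)) * (1 + R) ^ (-(N:ℝ)) := by
          rw [← Real.mul_rpow hc₀.le h1R.le]
          exact Real.rpow_le_rpow_of_nonpos (by positivity) hc (by linarith)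
        have hM : (t + nz) ^ (-α) ≤ M₂ := by
          rw [hsplit, hM₂def, mul_assoc]
          apply mul_le_mul hb1 hb2 (Real.rpow_nonneg hs0.le _) (Real.rpow_nonneg hθ.le _)
        have h5 : (t + nz) ^ (-α) * na ^ (-β) ≤ M₂ * na ^ (-β) :=
          mul_le_mul_of_nonneg_right hM (Real.rpow_nonneg hna0 _)
        have hmem : z ∈ S₂ := hna_le
        have hgz : M₂ * na ^ (-β) ≤ g z := by
          rw [hgdef]
          simp only
          rw [indicator_of_mem hmem]
          have : 0 ≤ M₁ * indicator S₁ (fun z => ‖z‖ ^ (-α)) z :=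
            mul_nonneg hM₁0 (indicator_nonneg (fun z _ => Real.rpow_nonneg (norm_nonneg _) _) z)
          linarith
        linarith
      -- case analysis
      rcases le_or_gt r₀ na with hcase | hcase
      · -- far region: `na ≥ (1+R)/2`
        refine hG1 ((2:ℝ) ^ β) (Real.rpow_nonneg (by norm_num) _)
          (by
            have := Real.rpow_nonneg (by positivity : (0:ℝ) ≤ 2 + 4 / ρ) β
            linarith) ?_
        have h6 : na ^ (-β) ≤ r₀ ^ (-β) :=
          Real.rpow_le_rpow_of_nonpos hr₀ hcase (by linarith)
        have h7 : r₀ ^ (-β) = (2:ℝ) ^ β * (1 + R) ^ (-β) := by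
          rw [hr₀def, Real.div_rpow h1R.le (by norm_num : (0:ℝ) ≤ 2), div_eq_mul_inv,
            ← Real.rpow_neg (by norm_num : (0:ℝ) ≤ 2), neg_neg, mul_comm]
        linarith [h6, le_of_eq h7]
      · have hnzR : R - r₀ ≤ nz := by linarith
        rcases le_or_gt (ρ / 2) t with hts | hts
        · -- `t` is large: use the pointwise bound on all of `S₂`
          apply hG2 ?_ hcase.le
          have h9 : (R - 1) / 2 ≤ nz := by
            rw [hr₀def] at hnzR
            linarith
          rw [hc₀def]
          exact stmt3_c0_bound1 ρ R t nz hρ hR0 hts h9 hnz0.le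
        · -- `t` is small, hence `R ≥ ρ/2`
          have hRρ : ρ / 2 ≤ R := stmt3_R_lower ρ R t hρ hR0 ht hts hcon
          rcases le_or_gt nz (R / 2) with hnz2 | hnz2
          · -- inner region: `na ≥ R/2`
            have hna_ge : R / 2 ≤ na := by linarith
            refine hG1 ((2 + 4 / ρ) ^ β)
              (Real.rpow_nonneg (by positivity) _)
              (by
                have := Real.rpow_nonneg (by norm_num : (0:ℝ) ≤ 2) β
                linarith) ?_
            have hq : (0:ℝ) < 2 + 4 / ρ := by positivity
            have hkey : (1 + R) / (2 + 4 / ρ) ≤ na :=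
              le_trans (stmt3_key_div ρ R hρ hRρ) hna_ge
            have h6 : na ^ (-β) ≤ ((1 + R) / (2 + 4 / ρ)) ^ (-β) :=
              Real.rpow_le_rpow_of_nonpos (by positivity) hkey (by linarith)
            have h7 : ((1 + R) / (2 + 4 / ρ)) ^ (-β) = (2 + 4 / ρ) ^ β * (1 + R) ^ (-β) := by
              rw [Real.div_rpow h1R.le hq.le, div_eq_mul_inv,
                ← Real.rpow_neg hq.le, neg_neg, mul_comm]
            linarith [h6, le_of_eq h7]
          · -- outer region: `nz > R/2`
            apply hG2 ?_ hcase.le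
            rw [hc₀def]
            exact stmt3_c0_bound2 ρ R t nz hρ hRρ hnz2.le ht.le
  -- rewrite the integrand of the goal
  have hsub : ∀ z : EuclideanSpace ℝ (Fin N), y - z - x = a - z := by
    intro z
    rw [ha, sub_right_comm]
  simp_rw [hsub]
  have hDmeas : MeasurableSet (Metric.closedBall (0 : EuclideanSpace ℝ (Fin N)) θ)ᶜ :=
    measurableSet_closedBall.compl
  -- main chain of inequalities
  have step1 : (∫ z in (Metric.closedBall (0 : EuclideanSpace ℝ (Fin N)) θ)ᶜ,
        1 / ((t + ‖z‖) ^ α * ‖a - z‖ ^ β))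
      ≤ ∫ z in (Metric.closedBall (0 : EuclideanSpace ℝ (Fin N)) θ)ᶜ, g z := by
    apply integral_mono_of_nonneg
    · exact ae_of_all _ fun z => by positivity
    · exact hgInt.integrableOn
    · exact (ae_restrict_iff' hDmeas).mpr (ae_of_all _ hptwise)
  have step2 : (∫ z in (Metric.closedBall (0 : EuclideanSpace ℝ (Fin N)) θ)ᶜ, g z)
      ≤ ∫ z, g z := setIntegral_le_integral hgInt (ae_of_all _ hg0)
  have hval1 : ∫ z, indicator S₁ (fun z : EuclideanSpace ℝ (Fin N) => ‖z‖ ^ (-α)) z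
      = K₁ * θ ^ ((N:ℝ) - α) := by
    rw [integral_indicator hS₁, stmt3_aux_val1 N hN α hα hθ, hK₁def]
  have hval2 : ∫ z, indicator S₂ (fun z : EuclideanSpace ℝ (Fin N) => ‖a - z‖ ^ (-β)) z
      = K₂ * r₀ ^ ((N:ℝ) - β) := by
    rw [hfeq, integral_sub_left_eq_self (indicator (Metric.closedBall
        (0 : EuclideanSpace ℝ (Fin N)) r₀) (fun w => ‖w‖ ^ (-β))) volume a,
      integral_indicator measurableSet_closedBall,
      stmt3_aux_val2 N hN β hβ0 hβ hr₀, hK₂def]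
  have step3 : (∫ z, g z) = M₁ * (K₁ * θ ^ ((N:ℝ) - α)) + M₂ * (K₂ * r₀ ^ ((N:ℝ) - β)) := by
    rw [hgdef, integral_add (hI₁.const_mul M₁) (hI₂.const_mul M₂),
      integral_const_mul, integral_const_mul, hval1, hval2]
  -- final algebraic manipulation
  have hθexp : θ ^ ((N:ℝ) - α) = θ ^ (-(α - (N:ℝ))) := by
    congr 1
    ring
  have hterm1 : M₁ * (K₁ * θ ^ ((N:ℝ) - α))
      = A₁ * ((1 + R) ^ (-β) * θ ^ (-(α - (N:ℝ)))) := by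
    rw [hθexp, hM₁def, hA₁def]
    ring
  have hterm2 : M₂ * (K₂ * r₀ ^ ((N:ℝ) - β))
      = A₂ * ((1 + R) ^ (-β) * θ ^ (-(α - (N:ℝ)))) := by
    have hr₀exp : r₀ ^ ((N:ℝ) - β) = (1 + R) ^ ((N:ℝ) - β) * (2:ℝ) ^ (β - N) := by
      rw [hr₀def, Real.div_rpow h1R.le (by norm_num : (0:ℝ) ≤ 2), div_eq_mul_inv,
        ← Real.rpow_neg (by norm_num : (0:ℝ) ≤ 2), neg_sub]
    have hRexp : (1 + R) ^ (-(N:ℝ)) * (1 + R) ^ ((N:ℝ) - β) = (1 + R) ^ (-β) := by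
      rw [← Real.rpow_add h1R]
      congr 1
      ring
    rw [hM₂def, hA₂def, hr₀exp]
    calc θ ^ (-(α - (N:ℝ))) * c₀ ^ (-(N:ℝ)) * (1 + R) ^ (-(N:ℝ))
          * (K₂ * ((1 + R) ^ ((N:ℝ) - β) * (2:ℝ) ^ (β - N)))
        = c₀ ^ (-(N:ℝ)) * (2:ℝ) ^ (β - N) * K₂ *
            (((1 + R) ^ (-(N:ℝ)) * (1 + R) ^ ((N:ℝ) - β)) * θ ^ (-(α - (N:ℝ)))) := by ring
      _ = c₀ ^ (-(N:ℝ)) * (2:ℝ) ^ (β - N) * K₂ *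
            ((1 + R) ^ (-β) * θ ^ (-(α - (N:ℝ)))) := by rw [hRexp]
  have hPQ : 0 ≤ (1 + R) ^ (-β) * θ ^ (-(α - (N:ℝ))) :=
    mul_nonneg (Real.rpow_nonneg h1R.le _) (Real.rpow_nonneg hθ.le _)
  calc (∫ z in (Metric.closedBall (0 : EuclideanSpace ℝ (Fin N)) θ)ᶜ,
        1 / ((t + ‖z‖) ^ α * ‖a - z‖ ^ β))
      ≤ ∫ z, g z := le_trans step1 step2
    _ = (A₁ + A₂) * ((1 + R) ^ (-β) * θ ^ (-(α - (N:ℝ)))) := by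
        rw [step3, hterm1, hterm2]; ring
    _ ≤ (A₁ + A₂ + 1) * ((1 + R) ^ (-β) * θ ^ (-(α - (N:ℝ)))) :=
        mul_le_mul_of_nonneg_right (by linarith) hPQ
    _ = (A₁ + A₂ + 1) * (1 + R) ^ (-β) * θ ^ (-(α - (N:ℝ))) := by ring
end
end

section
/- Let N ≥ 1 be an integer, ρ > 0, and let α, β be real constants with α > N and 0 < β < N. Then there exists a constant C = C(N, α, β, ρ) > 0 such that for all ε ∈ (0, 1], all x, y ∈ ℝ^N, and all t > 0 satisfying |y−x|² + t² ≥ ρ², one has ∫_{ℝ^N} (t+|z|)^{−α} · (1 + |y−z−x|/ε)^{−β} dz ≤ C · ε^β · ( (1+|y−x|)^{−β} · t^{−(α−N)} + (1+|y−x|)^{−α} ). -/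
open MeasureTheory Set

noncomputable section

open Metric
open scoped ENNReal NNReal

lemma helper_rpow_inv {a b K e : ℝ} (ha : 0 < a) (hb : 0 < b) (hK : 0 < K) (he : 0 ≤ e)
    (h : a ≤ K * b) : b ^ (-e) ≤ K ^ e * a ^ (-e) := by
  have hbe : (0:ℝ) < b ^ e := Real.rpow_pos_of_pos hb e
  have hae : (0:ℝ) < a ^ e := Real.rpow_pos_of_pos ha e
  have hKe : (0:ℝ) < K ^ e := Real.rpow_pos_of_pos hK e
  have h1 : a ^ e ≤ K ^ e * b ^ e := by
    calc a ^ e ≤ (K * b) ^ e := Real.rpow_le_rpow ha.le h he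
    _ = K ^ e * b ^ e := Real.mul_rpow hK.le hb.le
  have h2 : a ^ e / K ^ e ≤ b ^ e := (div_le_iff₀ hKe).2 (by linarith [h1])
  rw [Real.rpow_neg hb.le, Real.rpow_neg ha.le]
  calc (b ^ e)⁻¹ ≤ (a ^ e / K ^ e)⁻¹ := by
        exact inv_anti₀ (div_pos hae hKe) h2
    _ = K ^ e * (a ^ e)⁻¹ := by rw [inv_div, div_eq_mul_inv]

lemma pow_rpow_comm {q : ℝ} (hq : 0 < q) (e : ℝ) (n : ℕ) :
    ((q ^ n : ℝ)) ^ e = (q ^ e) ^ n := by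
  rw [← Real.rpow_natCast q n, ← Real.rpow_mul hq.le, mul_comm, Real.rpow_mul hq.le,
    Real.rpow_natCast]

lemma rpow_neg_mul_pow {x : ℝ} (hx : 0 < x) (N : ℕ) (β : ℝ) :
    x ^ (-β) * x ^ (N : ℕ) = x ^ ((N : ℝ) - β) := by
  rw [← Real.rpow_natCast x N, ← Real.rpow_add hx]
  ring_nf

lemma lint_ball (N : ℕ) (hN : 1 ≤ N) (β : ℝ) (hβ0 : 0 < β) (hβ : β < N) :
    ∃ K : ℝ≥0∞, K ≠ ⊤ ∧ ∀ (w : EuclideanSpace ℝ (Fin N)) (r ε : ℝ), 0 < r → 0 ≤ ε →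
      ∫⁻ z in Metric.ball w r, ENNReal.ofReal ((ε + ‖w - z‖) ^ (-β)) ≤
        K * ENNReal.ofReal (r ^ ((N : ℝ) - β)) := by
  haveI : Nontrivial (EuclideanSpace ℝ (Fin N)) := by
    apply Module.nontrivial_of_finrank_pos (R := ℝ)
    rw [finrank_euclideanSpace_fin]; omega
  set V : ℝ≥0∞ := volume (Metric.ball (0 : EuclideanSpace ℝ (Fin N)) 1) with hV
  have hVtop : V ≠ ⊤ := measure_ball_lt_top.ne
  set c : ℝ := ((2:ℝ)⁻¹) ^ ((N : ℝ) - β) with hc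
  have hc0 : 0 ≤ c := Real.rpow_nonneg (by norm_num) _
  have hc1 : c < 1 := Real.rpow_lt_one (by norm_num) (by norm_num) (by linarith)
  set S : ℝ≥0∞ := ∑' n : ℕ, (ENNReal.ofReal c) ^ n with hS
  have hStop : S ≠ ⊤ := by
    rw [hS, ENNReal.tsum_geometric]
    have : (ENNReal.ofReal c) < 1 := by
      rw [← ENNReal.ofReal_one]
      exact ENNReal.ofReal_lt_ofReal_iff_of_nonneg hc0 |>.2 hc1
    exact (ENNReal.inv_lt_top.2 (tsub_pos_of_lt this)).ne
  refine ⟨V * ENNReal.ofReal ((2:ℝ) ^ β) * S, ?_, ?_⟩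
  · exact ENNReal.mul_ne_top (ENNReal.mul_ne_top hVtop ENNReal.ofReal_ne_top) hStop
  intro w r ε hr hε
  set s : ℕ → ℝ := fun n => r * (2⁻¹ : ℝ) ^ n with hs
  have hspos : ∀ n, 0 < s n := fun n => by positivity
  -- covering
  have hcover : Metric.ball w r ⊆ {w} ∪ ⋃ n, (Metric.ball w (s n) \ Metric.ball w (s (n+1))) := by
    intro z hz
    rcases eq_or_ne z w with rfl | hzw
    · exact Or.inl rfl
    right
    have hd : 0 < dist z w := dist_pos.2 hzw
    have hdr : dist z w < r := mem_ball.1 hz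
    have hex : ∃ n : ℕ, s (n + 1) ≤ dist z w := by
      obtain ⟨m, hm⟩ := exists_pow_lt_of_lt_one (div_pos hd hr) (by norm_num : (2⁻¹:ℝ) < 1)
      refine ⟨m, ?_⟩
      have : s (m+1) ≤ s m := by
        simp only [hs, pow_succ]
        nlinarith [hspos m, pow_pos (show (0:ℝ) < 2⁻¹ by norm_num) m]
      have h2 : s m < dist z w := by
        have h3 : r * (2⁻¹:ℝ)^m < r * (dist z w / r) := by
          exact mul_lt_mul_of_pos_left hm hr
        have h4 : r * (dist z w / r) = dist z w := by field_simp
        rw [hs]; dsimp only; linarith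
      linarith
    set n := Nat.find hex with hn
    have h1 : s (n + 1) ≤ dist z w := Nat.find_spec hex
    have h2 : dist z w < s n := by
      rcases Nat.eq_zero_or_pos n with h | h
      · rw [h]; simpa [hs] using hdr
      · have hlt : n - 1 < n := by omega
        have := Nat.find_min hex hlt
        simp only [not_le] at this
        have heq : n - 1 + 1 = n := by omega
        rwa [heq] at this
    exact Set.mem_iUnion.2 ⟨n, ⟨mem_ball.2 h2, fun hmem => absurd (mem_ball.1 hmem) (not_lt.2 h1)⟩⟩
  calc ∫⁻ z in Metric.ball w r, ENNReal.ofReal ((ε + ‖w - z‖) ^ (-β))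
      ≤ ∫⁻ z in ({w} ∪ ⋃ n, (Metric.ball w (s n) \ Metric.ball w (s (n+1)))),
          ENNReal.ofReal ((ε + ‖w - z‖) ^ (-β)) := lintegral_mono_set hcover
    _ ≤ (∫⁻ z in ({w} : Set _), ENNReal.ofReal ((ε + ‖w - z‖) ^ (-β))) +
        ∫⁻ z in (⋃ n, (Metric.ball w (s n) \ Metric.ball w (s (n+1)))),
          ENNReal.ofReal ((ε + ‖w - z‖) ^ (-β)) := lintegral_union_le _ _ _
    _ ≤ 0 + ∑' n : ℕ, ∫⁻ z in (Metric.ball w (s n) \ Metric.ball w (s (n+1))),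
          ENNReal.ofReal ((ε + ‖w - z‖) ^ (-β)) := by
        gcongr
        · exact le_of_eq (setLIntegral_measure_zero _ _ (measure_singleton w))
        · exact lintegral_iUnion_le _ _
    _ ≤ ∑' n : ℕ, ENNReal.ofReal ((s (n+1)) ^ (-β)) * ENNReal.ofReal ((s n) ^ (N:ℕ)) * V := by
        rw [zero_add]
        gcongr with n
        calc ∫⁻ z in (Metric.ball w (s n) \ Metric.ball w (s (n+1))),
              ENNReal.ofReal ((ε + ‖w - z‖) ^ (-β))
            ≤ ∫⁻ _ in (Metric.ball w (s n) \ Metric.ball w (s (n+1))),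
              ENNReal.ofReal ((s (n+1)) ^ (-β)) := by
              apply setLIntegral_mono measurable_const
              intro z hz
              apply ENNReal.ofReal_le_ofReal
              have h1 : s (n+1) ≤ dist z w := not_lt.1 fun hl => hz.2 (mem_ball.2 hl)
              have h2 : s (n+1) ≤ ε + ‖w - z‖ := by
                rw [← dist_eq_norm, dist_comm]; linarith
              have := helper_rpow_inv (hspos (n+1)) (lt_of_lt_of_le (hspos (n+1)) h2)
                one_pos hβ0.le (by linarith : s (n+1) ≤ 1 * (ε + ‖w - z‖))
              simpa using this
          _ = ENNReal.ofReal ((s (n+1)) ^ (-β)) *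
                volume (Metric.ball w (s n) \ Metric.ball w (s (n+1))) := setLIntegral_const _ _
          _ ≤ ENNReal.ofReal ((s (n+1)) ^ (-β)) * (ENNReal.ofReal ((s n) ^ (N:ℕ)) * V) := by
              gcongr
              calc volume (Metric.ball w (s n) \ Metric.ball w (s (n+1)))
                  ≤ volume (Metric.ball w (s n)) := measure_mono Set.diff_subset
                _ = ENNReal.ofReal ((s n) ^ (N:ℕ)) * V := by
                    rw [Measure.addHaar_ball volume w (hspos n).le, finrank_euclideanSpace_fin]
          _ = ENNReal.ofReal ((s (n+1)) ^ (-β)) * ENNReal.ofReal ((s n) ^ (N:ℕ)) * V := by ring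
    _ ≤ ∑' n : ℕ, (ENNReal.ofReal ((2:ℝ) ^ β) * ENNReal.ofReal (r ^ ((N:ℝ) - β)) *
          (ENNReal.ofReal c) ^ n) * V := by
        apply ENNReal.tsum_le_tsum
        intro n
        apply mul_le_mul_left
        rw [← ENNReal.ofReal_mul (Real.rpow_nonneg (hspos (n+1)).le _),
          ← ENNReal.ofReal_pow hc0, ← ENNReal.ofReal_mul
            (by positivity), ← ENNReal.ofReal_mul (by positivity)]
        apply ENNReal.ofReal_le_ofReal
        apply le_of_eq
        -- s (n+1) ^ (-β) * s n ^ N = 2^β * r^(N-β) * c^n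
        have h2 : (0:ℝ) < 2⁻¹ := by norm_num
        have hq : (0:ℝ) < (2⁻¹:ℝ) ^ n := by positivity
        have e1 : s (n+1) ^ (-β) = r ^ (-β) * ((2⁻¹:ℝ)^n) ^ (-β) * (2:ℝ) ^ β := by
          rw [hs]
          simp only [pow_succ]
          rw [show r * ((2⁻¹:ℝ)^n * 2⁻¹) = (r * (2⁻¹:ℝ)^n) * 2⁻¹ by ring,
            Real.mul_rpow (by positivity) (by norm_num),
            Real.mul_rpow hr.le (by positivity)]
          rw [Real.inv_rpow (by norm_num : (0:ℝ) ≤ 2), ← Real.rpow_neg (by norm_num : (0:ℝ) ≤ 2)]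
          ring_nf
        have e2 : (s n : ℝ) ^ (N:ℕ) = r ^ (N:ℕ) * ((2⁻¹:ℝ)^n) ^ (N:ℕ) := by
          rw [hs]; exact mul_pow _ _ _
        rw [e1, e2]
        have e3 : r ^ (-β) * r ^ (N:ℕ) = r ^ ((N:ℝ) - β) := rpow_neg_mul_pow hr N β
        have e4 : ((2⁻¹:ℝ)^n) ^ (-β) * ((2⁻¹:ℝ)^n) ^ (N:ℕ) = ((2⁻¹:ℝ)^n) ^ ((N:ℝ) - β) :=
          rpow_neg_mul_pow hq N β
        have e5 : ((2⁻¹:ℝ)^n) ^ ((N:ℝ) - β) = c ^ n := pow_rpow_comm h2 _ n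
        calc r ^ (-β) * ((2⁻¹:ℝ)^n) ^ (-β) * (2:ℝ) ^ β * (r ^ (N:ℕ) * ((2⁻¹:ℝ)^n) ^ (N:ℕ))
            = (2:ℝ) ^ β * ((r ^ (-β) * r ^ (N:ℕ)) * (((2⁻¹:ℝ)^n) ^ (-β) * ((2⁻¹:ℝ)^n) ^ (N:ℕ))) := by
              ring
          _ = (2:ℝ) ^ β * (r ^ ((N:ℝ) - β) * c ^ n) := by rw [e3, e4, e5]
          _ = (2:ℝ) ^ β * r ^ ((N:ℝ) - β) * c ^ n := by ring
    _ = V * ENNReal.ofReal ((2:ℝ) ^ β) * S * ENNReal.ofReal (r ^ ((N:ℝ) - β)) := by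
        rw [ENNReal.tsum_mul_right, ENNReal.tsum_mul_left, ← hS]
        ring

lemma lint_shell (N : ℕ) (hN : 1 ≤ N) (α : ℝ) (hα : (N : ℝ) < α) :
    ∃ K : ℝ≥0∞, K ≠ ⊤ ∧ ∀ t : ℝ, 0 < t →
      ∫⁻ z : EuclideanSpace ℝ (Fin N), ENNReal.ofReal ((t + ‖z‖) ^ (-α)) ≤
        K * ENNReal.ofReal (t ^ ((N : ℝ) - α)) := by
  haveI : Nontrivial (EuclideanSpace ℝ (Fin N)) := by
    apply Module.nontrivial_of_finrank_pos (R := ℝ)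
    rw [finrank_euclideanSpace_fin]; omega
  set V : ℝ≥0∞ := volume (Metric.ball (0 : EuclideanSpace ℝ (Fin N)) 1) with hV
  have hVtop : V ≠ ⊤ := measure_ball_lt_top.ne
  set c : ℝ := (2:ℝ) ^ ((N : ℝ) - α) with hc
  have hc0 : 0 ≤ c := Real.rpow_nonneg (by norm_num) _
  have hc1 : c < 1 := Real.rpow_lt_one_of_one_lt_of_neg (by norm_num) (by linarith)
  set S : ℝ≥0∞ := ∑' n : ℕ, (ENNReal.ofReal c) ^ n with hS
  have hStop : S ≠ ⊤ := by
    rw [hS, ENNReal.tsum_geometric]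
    have : (ENNReal.ofReal c) < 1 := by
      rw [← ENNReal.ofReal_one]
      exact ENNReal.ofReal_lt_ofReal_iff_of_nonneg hc0 |>.2 hc1
    exact (ENNReal.inv_lt_top.2 (tsub_pos_of_lt this)).ne
  refine ⟨V + V * ENNReal.ofReal ((2:ℝ) ^ (N:ℝ)) * S, ?_, ?_⟩
  · exact ENNReal.add_ne_top.2 ⟨hVtop,
      ENNReal.mul_ne_top (ENNReal.mul_ne_top hVtop ENNReal.ofReal_ne_top) hStop⟩
  intro t ht
  set s : ℕ → ℝ := fun n => t * (2:ℝ) ^ n with hs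
  have hspos : ∀ n, 0 < s n := fun n => by positivity
  have hcover : (Set.univ : Set (EuclideanSpace ℝ (Fin N))) ⊆
      Metric.ball 0 t ∪ ⋃ n, (Metric.ball (0:EuclideanSpace ℝ (Fin N)) (s (n+1)) \ Metric.ball 0 (s n)) := by
    intro z _
    rcases lt_or_ge ‖z‖ t with h | h
    · exact Or.inl (mem_ball_zero_iff.2 h)
    right
    have hex : ∃ n : ℕ, ‖z‖ < s (n + 1) := by
      obtain ⟨m, hm⟩ := pow_unbounded_of_one_lt (‖z‖ / t) (by norm_num : (1:ℝ) < 2)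
      refine ⟨m, ?_⟩
      have h1 : ‖z‖ < t * 2 ^ m := by
        have := (div_lt_iff₀ ht).1 hm
        linarith [this]
      have h2 : t * (2:ℝ)^m ≤ t * 2^(m+1) := by
        have : (2:ℝ)^m ≤ 2^(m+1) := by
          apply pow_le_pow_right₀ (by norm_num); omega
        nlinarith
      rw [hs]; dsimp only; linarith
    set n := Nat.find hex with hn
    have h1 : ‖z‖ < s (n + 1) := Nat.find_spec hex
    have h2 : s n ≤ ‖z‖ := by
      rcases Nat.eq_zero_or_pos n with h0 | h0
      · rw [h0]; simpa [hs] using h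
      · have hlt : n - 1 < n := by omega
        have := Nat.find_min hex hlt
        simp only [not_lt] at this
        have heq : n - 1 + 1 = n := by omega
        rwa [heq] at this
    exact Set.mem_iUnion.2 ⟨n, ⟨mem_ball_zero_iff.2 h1,
      fun hmem => absurd (mem_ball_zero_iff.1 hmem) (not_lt.2 h2)⟩⟩
  calc ∫⁻ z : EuclideanSpace ℝ (Fin N), ENNReal.ofReal ((t + ‖z‖) ^ (-α))
      = ∫⁻ z in (Set.univ : Set (EuclideanSpace ℝ (Fin N))),
          ENNReal.ofReal ((t + ‖z‖) ^ (-α)) := (setLIntegral_univ _).symm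
    _ ≤ ∫⁻ z in (Metric.ball (0:EuclideanSpace ℝ (Fin N)) t ∪
          ⋃ n, (Metric.ball (0:EuclideanSpace ℝ (Fin N)) (s (n+1)) \ Metric.ball 0 (s n))),
          ENNReal.ofReal ((t + ‖z‖) ^ (-α)) := lintegral_mono_set hcover
    _ ≤ (∫⁻ z in Metric.ball (0:EuclideanSpace ℝ (Fin N)) t,
          ENNReal.ofReal ((t + ‖z‖) ^ (-α))) +
        ∫⁻ z in (⋃ n, (Metric.ball (0:EuclideanSpace ℝ (Fin N)) (s (n+1)) \ Metric.ball 0 (s n))),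
          ENNReal.ofReal ((t + ‖z‖) ^ (-α)) := lintegral_union_le _ _ _
    _ ≤ ENNReal.ofReal (t ^ (-α)) * (ENNReal.ofReal (t ^ (N:ℕ)) * V) +
        ∑' n : ℕ, ∫⁻ z in (Metric.ball (0:EuclideanSpace ℝ (Fin N)) (s (n+1)) \ Metric.ball 0 (s n)),
          ENNReal.ofReal ((t + ‖z‖) ^ (-α)) := by
        gcongr
        · calc ∫⁻ z in Metric.ball (0:EuclideanSpace ℝ (Fin N)) t,
                ENNReal.ofReal ((t + ‖z‖) ^ (-α))
              ≤ ∫⁻ _ in Metric.ball (0:EuclideanSpace ℝ (Fin N)) t,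
                ENNReal.ofReal (t ^ (-α)) := by
                apply setLIntegral_mono measurable_const
                intro z _
                apply ENNReal.ofReal_le_ofReal
                have hz0 : (0:ℝ) ≤ ‖z‖ := norm_nonneg z
                have := helper_rpow_inv ht (by linarith : (0:ℝ) < t + ‖z‖) one_pos
                  (by linarith : (0:ℝ) ≤ α) (by linarith : t ≤ 1 * (t + ‖z‖))
                simpa using this
            _ = ENNReal.ofReal (t ^ (-α)) * volume (Metric.ball (0:EuclideanSpace ℝ (Fin N)) t) :=
                setLIntegral_const _ _
            _ = ENNReal.ofReal (t ^ (-α)) * (ENNReal.ofReal (t ^ (N:ℕ)) * V) := by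
                rw [Measure.addHaar_ball volume _ ht.le, finrank_euclideanSpace_fin]
        · exact lintegral_iUnion_le _ _
    _ ≤ ENNReal.ofReal (t ^ (-α)) * (ENNReal.ofReal (t ^ (N:ℕ)) * V) +
        ∑' n : ℕ, ENNReal.ofReal ((s n) ^ (-α)) * (ENNReal.ofReal ((s (n+1)) ^ (N:ℕ)) * V) := by
        gcongr with n
        calc ∫⁻ z in (Metric.ball (0:EuclideanSpace ℝ (Fin N)) (s (n+1)) \ Metric.ball 0 (s n)),
              ENNReal.ofReal ((t + ‖z‖) ^ (-α))
            ≤ ∫⁻ _ in (Metric.ball (0:EuclideanSpace ℝ (Fin N)) (s (n+1)) \ Metric.ball 0 (s n)),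
              ENNReal.ofReal ((s n) ^ (-α)) := by
              apply setLIntegral_mono measurable_const
              intro z hz
              apply ENNReal.ofReal_le_ofReal
              have h1 : s n ≤ ‖z‖ := not_lt.1 fun hl => hz.2 (mem_ball_zero_iff.2 hl)
              have hz0 : (0:ℝ) ≤ ‖z‖ := norm_nonneg z
              have := helper_rpow_inv (hspos n) (by linarith : (0:ℝ) < t + ‖z‖) one_pos
                (by linarith : (0:ℝ) ≤ α) (by linarith : s n ≤ 1 * (t + ‖z‖))
              simpa using this
          _ = ENNReal.ofReal ((s n) ^ (-α)) *
                volume (Metric.ball (0:EuclideanSpace ℝ (Fin N)) (s (n+1)) \ Metric.ball 0 (s n)) :=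
              setLIntegral_const _ _
          _ ≤ ENNReal.ofReal ((s n) ^ (-α)) * (ENNReal.ofReal ((s (n+1)) ^ (N:ℕ)) * V) := by
              gcongr
              calc volume (Metric.ball (0:EuclideanSpace ℝ (Fin N)) (s (n+1)) \ Metric.ball 0 (s n))
                  ≤ volume (Metric.ball (0:EuclideanSpace ℝ (Fin N)) (s (n+1))) :=
                    measure_mono Set.diff_subset
                _ = ENNReal.ofReal ((s (n+1)) ^ (N:ℕ)) * V := by
                    rw [Measure.addHaar_ball volume _ (hspos (n+1)).le, finrank_euclideanSpace_fin]
    _ ≤ ENNReal.ofReal (t ^ ((N:ℝ) - α)) * V +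
        ∑' n : ℕ, (ENNReal.ofReal ((2:ℝ)^(N:ℝ)) * ENNReal.ofReal (t ^ ((N:ℝ) - α)) *
          (ENNReal.ofReal c) ^ n) * V := by
        apply add_le_add
        · rw [← mul_assoc]
          apply mul_le_mul_left
          rw [← ENNReal.ofReal_mul (Real.rpow_nonneg ht.le _)]
          exact le_of_eq (congrArg ENNReal.ofReal (rpow_neg_mul_pow ht N α))
        · apply ENNReal.tsum_le_tsum
          intro n
          rw [← mul_assoc]
          apply mul_le_mul_left
          rw [← ENNReal.ofReal_mul (Real.rpow_nonneg (hspos n).le _),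
            ← ENNReal.ofReal_pow hc0,
            ← ENNReal.ofReal_mul (by positivity),
            ← ENNReal.ofReal_mul (by positivity)]
          apply ENNReal.ofReal_le_ofReal
          apply le_of_eq
          have h2n : (0:ℝ) < (2:ℝ)^n := by positivity
          have e1 : s n ^ (-α) = t ^ (-α) * ((2:ℝ)^n) ^ (-α) := by
            rw [hs]; dsimp only; rw [Real.mul_rpow ht.le (by positivity)]
          have e2 : (s (n+1) : ℝ) ^ (N:ℕ) = t ^ (N:ℕ) * ((2:ℝ)^n) ^ (N:ℕ) * (2:ℝ)^(N:ℕ) := by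
            rw [hs]; dsimp only; rw [pow_succ, mul_pow, mul_pow]; ring
          rw [e1, e2]
          have e3 := rpow_neg_mul_pow ht N α
          have e4 := rpow_neg_mul_pow h2n N α
          have e5 : ((2:ℝ)^n) ^ ((N:ℝ) - α) = c ^ n := pow_rpow_comm (by norm_num) _ n
          have e6 : (2:ℝ)^(N:ℕ) = (2:ℝ)^((N:ℝ)) := (Real.rpow_natCast 2 N).symm
          calc t ^ (-α) * ((2:ℝ)^n) ^ (-α) * (t ^ (N:ℕ) * ((2:ℝ)^n) ^ (N:ℕ) * (2:ℝ)^(N:ℕ))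
              = (t ^ (-α) * t ^ (N:ℕ)) * (((2:ℝ)^n) ^ (-α) * ((2:ℝ)^n) ^ (N:ℕ)) * (2:ℝ)^(N:ℕ) := by
                ring
            _ = t ^ ((N:ℝ) - α) * c ^ n * (2:ℝ)^((N:ℝ)) := by rw [e3, e4, e5, e6]
            _ = 2 ^ ((N:ℝ)) * t ^ ((N:ℝ) - α) * c ^ n := by ring
    _ = (V + V * ENNReal.ofReal ((2:ℝ) ^ (N:ℝ)) * S) * ENNReal.ofReal (t ^ ((N:ℝ) - α)) := by
        rw [ENNReal.tsum_mul_right, ENNReal.tsum_mul_left, ← hS]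
        ring

set_option maxHeartbeats 2000000 in
lemma main_lint (N : ℕ) (hN : 1 ≤ N) (ρ α β : ℝ) (hρ : 0 < ρ) (hα : (N : ℝ) < α)
    (hβ0 : 0 < β) (hβ : β < N) :
    ∃ C : ℝ, 0 < C ∧ ∀ (w : EuclideanSpace ℝ (Fin N)) (ε t : ℝ), 0 < ε → 0 < t →
      ρ ^ 2 ≤ ‖w‖ ^ 2 + t ^ 2 →
      (∫⁻ z : EuclideanSpace ℝ (Fin N),
          ENNReal.ofReal ((t + ‖z‖) ^ (-α)) * ENNReal.ofReal ((ε + ‖w - z‖) ^ (-β))) ≤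
        ENNReal.ofReal (C * ((1 + ‖w‖) ^ (-β) * t ^ ((N : ℝ) - α))) := by
  obtain ⟨K1, hK1top, hK1⟩ := lint_shell N hN α hα
  obtain ⟨K2, hK2top, hK2⟩ := lint_ball N hN β hβ0 hβ
  set k1 : ℝ := K1.toReal with hk1def
  set k2 : ℝ := K2.toReal with hk2def
  have hk1nn : 0 ≤ k1 := ENNReal.toReal_nonneg
  have hk2nn : 0 ≤ k2 := ENNReal.toReal_nonneg
  have hK1eq : K1 = ENNReal.ofReal k1 := (ENNReal.ofReal_toReal hK1top).symm
  have hK2eq : K2 = ENNReal.ofReal k2 := (ENNReal.ofReal_toReal hK2top).symm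
  set c0 : ℝ := ρ / 2 with hc0def
  have hc0 : 0 < c0 := by positivity
  set a1 : ℝ := k1 * (2 * (1 + c0) / c0) ^ β with ha1
  set a2 : ℝ := k2 * (2 / c0 + 2) ^ β with ha2
  set a3 : ℝ := k1 * (1 + c0) ^ β with ha3
  set a4 : ℝ := k2 * (c0 ^ (-(N:ℝ)) * (1 + c0) ^ β) with ha4
  have ha1nn : 0 ≤ a1 := mul_nonneg hk1nn (Real.rpow_nonneg (by positivity) _)
  have ha2nn : 0 ≤ a2 := mul_nonneg hk2nn (Real.rpow_nonneg (by positivity) _)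
  have ha3nn : 0 ≤ a3 := mul_nonneg hk1nn (Real.rpow_nonneg (by positivity) _)
  have ha4nn : 0 ≤ a4 := mul_nonneg hk2nn
    (mul_nonneg (Real.rpow_nonneg hc0.le _) (Real.rpow_nonneg (by positivity) _))
  refine ⟨a1 + a2 + a3 + a4 + 1, by linarith, ?_⟩
  set C : ℝ := a1 + a2 + a3 + a4 + 1 with hCdef
  intro w ε t hε ht hρ2
  have hNnn : (0:ℝ) ≤ (N:ℝ) := Nat.cast_nonneg N
  set d : ℝ := ‖w‖ with hddef
  have hd0 : 0 ≤ d := norm_nonneg w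
  set P : ℝ := (1 + d) ^ (-β) * t ^ ((N:ℝ) - α) with hPdef
  have hP : 0 ≤ P := mul_nonneg (Real.rpow_nonneg (by positivity) _)
    (Real.rpow_nonneg ht.le _)
  -- generic splitting estimate
  have key : ∀ r A : ℝ, 0 < r → 0 ≤ A → (∀ z ∈ Metric.ball w r, (t + ‖z‖) ^ (-α) ≤ A) →
      (∫⁻ z : EuclideanSpace ℝ (Fin N),
          ENNReal.ofReal ((t + ‖z‖) ^ (-α)) * ENNReal.ofReal ((ε + ‖w - z‖) ^ (-β))) ≤
        ENNReal.ofReal (r ^ (-β) * (k1 * t ^ ((N:ℝ) - α)) + A * (k2 * r ^ ((N:ℝ) - β))) := by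
    intro r A hr hA hball
    have hmc : Measurable fun z : EuclideanSpace ℝ (Fin N) =>
        ENNReal.ofReal ((t + ‖z‖) ^ (-α)) := by
      apply ENNReal.measurable_ofReal.comp
      apply Continuous.measurable
      exact (continuous_const.add continuous_norm).rpow_const
        (fun z => Or.inl (ne_of_gt (add_pos_of_pos_of_nonneg ht (norm_nonneg _))))
    have hmb : Measurable fun z : EuclideanSpace ℝ (Fin N) =>
        ENNReal.ofReal ((ε + ‖w - z‖) ^ (-β)) := by
      apply ENNReal.measurable_ofReal.comp
      apply Continuous.measurable
      apply Continuous.rpow_const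
      · exact continuous_const.add (continuous_const.sub continuous_id).norm
      · intro z
        left
        have : (0:ℝ) ≤ ‖w - z‖ := norm_nonneg _
        positivity
    rw [← lintegral_add_compl
      (fun z => ENNReal.ofReal ((t + ‖z‖) ^ (-α)) * ENNReal.ofReal ((ε + ‖w - z‖) ^ (-β)))
      (measurableSet_ball (x := w) (ε := r))]
    rw [ENNReal.ofReal_add (by positivity) (mul_nonneg hA (mul_nonneg hk2nn
      (Real.rpow_nonneg hr.le _)))]
    rw [add_comm (ENNReal.ofReal _)]
    apply add_le_add
    · -- ball piece
      calc ∫⁻ z in Metric.ball w r,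
            ENNReal.ofReal ((t + ‖z‖) ^ (-α)) * ENNReal.ofReal ((ε + ‖w - z‖) ^ (-β))
          ≤ ∫⁻ z in Metric.ball w r,
            ENNReal.ofReal A * ENNReal.ofReal ((ε + ‖w - z‖) ^ (-β)) := by
            apply setLIntegral_mono (measurable_const.mul hmb)
            intro z hz
            exact mul_le_mul_left (ENNReal.ofReal_le_ofReal (hball z hz)) _
        _ = ENNReal.ofReal A * ∫⁻ z in Metric.ball w r,
              ENNReal.ofReal ((ε + ‖w - z‖) ^ (-β)) :=
            lintegral_const_mul' _ _ ENNReal.ofReal_ne_top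
        _ ≤ ENNReal.ofReal A * (K2 * ENNReal.ofReal (r ^ ((N:ℝ) - β))) :=
            mul_le_mul_right (hK2 w r ε hr hε.le) _
        _ = ENNReal.ofReal (A * (k2 * r ^ ((N:ℝ) - β))) := by
            rw [hK2eq, ← ENNReal.ofReal_mul hk2nn, ← ENNReal.ofReal_mul hA]
    · -- complement piece
      calc ∫⁻ z in (Metric.ball w r)ᶜ,
            ENNReal.ofReal ((t + ‖z‖) ^ (-α)) * ENNReal.ofReal ((ε + ‖w - z‖) ^ (-β))
          ≤ ∫⁻ z in (Metric.ball w r)ᶜ,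
            ENNReal.ofReal (r ^ (-β)) * ENNReal.ofReal ((t + ‖z‖) ^ (-α)) := by
            apply setLIntegral_mono (measurable_const.mul hmc)
            intro z hz
            rw [mul_comm]
            apply mul_le_mul_left
            apply ENNReal.ofReal_le_ofReal
            have h1 : r ≤ dist z w := not_lt.1 fun hl => hz (mem_ball.2 hl)
            have h2 : r ≤ ε + ‖w - z‖ := by
              rw [← dist_eq_norm, dist_comm]; linarith
            have := helper_rpow_inv hr (lt_of_lt_of_le hr h2) one_pos hβ0.le
              (by linarith : r ≤ 1 * (ε + ‖w - z‖))
            simpa using this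
        _ = ENNReal.ofReal (r ^ (-β)) * ∫⁻ z in (Metric.ball w r)ᶜ,
              ENNReal.ofReal ((t + ‖z‖) ^ (-α)) :=
            lintegral_const_mul' _ _ ENNReal.ofReal_ne_top
        _ ≤ ENNReal.ofReal (r ^ (-β)) * ∫⁻ z : EuclideanSpace ℝ (Fin N),
              ENNReal.ofReal ((t + ‖z‖) ^ (-α)) :=
            mul_le_mul_right (setLIntegral_le_lintegral _ _) _
        _ ≤ ENNReal.ofReal (r ^ (-β)) * (K1 * ENNReal.ofReal (t ^ ((N:ℝ) - α))) :=
            mul_le_mul_right (hK1 t ht) _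
        _ = ENNReal.ofReal (r ^ (-β) * (k1 * t ^ ((N:ℝ) - α))) := by
            rw [hK1eq, ← ENNReal.ofReal_mul hk1nn,
              ← ENNReal.ofReal_mul (Real.rpow_nonneg hr.le _)]
  rcases le_or_gt c0 d with hcase | hcase
  · -- Case A : d ≥ c0
    have hd : 0 < d := lt_of_lt_of_le hc0 hcase
    set M : ℝ := t + d / 2 with hMdef
    have hM : 0 < M := by positivity
    have hball : ∀ z ∈ Metric.ball w (d/2), (t + ‖z‖) ^ (-α) ≤ M ^ (-α) := by
      intro z hz
      have h1 : ‖w - z‖ < d / 2 := by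
        rw [← dist_eq_norm, dist_comm]; exact mem_ball.1 hz
      have h2 : d - ‖z‖ ≤ ‖w - z‖ := by
        have := norm_sub_norm_le w z
        linarith [this]
      have h3 : M ≤ t + ‖z‖ := by rw [hMdef]; linarith
      have := helper_rpow_inv hM (by linarith : (0:ℝ) < t + ‖z‖) one_pos
        (by linarith : (0:ℝ) ≤ α) (by linarith : M ≤ 1 * (t + ‖z‖))
      simpa using this
    refine le_trans (key (d/2) (M ^ (-α)) (by positivity) (Real.rpow_nonneg hM.le _) hball) ?_
    apply ENNReal.ofReal_le_ofReal
    -- real arithmetic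
    have h1 : (d/2) ^ (-β) ≤ (2 * (1 + c0) / c0) ^ β * (1 + d) ^ (-β) := by
      apply helper_rpow_inv (by positivity) (by positivity) (by positivity) hβ0.le
      have e : (2 * (1 + c0) / c0) * (d/2) = (1 + c0) * d / c0 := by ring
      rw [e, le_div_iff₀ hc0]
      nlinarith
    have h2a : (d/2) ^ ((N:ℝ) - β) ≤ M ^ ((N:ℝ) - β) :=
      Real.rpow_le_rpow (by positivity) (by linarith) (by linarith)
    have h2b : M ^ (-α) * M ^ ((N:ℝ) - β) = M ^ (-β) * M ^ ((N:ℝ) - α) := by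
      rw [← Real.rpow_add hM, ← Real.rpow_add hM]; ring_nf
    have h2c : M ^ ((N:ℝ) - α) ≤ t ^ ((N:ℝ) - α) := by
      have := helper_rpow_inv ht hM one_pos (by linarith : (0:ℝ) ≤ α - (N:ℝ))
        (by rw [one_mul, hMdef]; linarith)
      rw [Real.one_rpow, one_mul] at this
      rw [show (N:ℝ) - α = -(α - (N:ℝ)) by ring]
      exact this
    have h2d : M ^ (-β) ≤ (2 / c0 + 2) ^ β * (1 + d) ^ (-β) := by
      apply helper_rpow_inv (by positivity) hM (by positivity) hβ0.le
      have e1 : (1:ℝ) ≤ 2 * M / c0 := by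
        rw [le_div_iff₀ hc0, one_mul, hMdef]; linarith
      have e2 : d ≤ 2 * M := by rw [hMdef]; linarith
      have e3 : (2 / c0 + 2) * M = 2 * M / c0 + 2 * M := by ring
      rw [e3]; linarith
    calc (d/2) ^ (-β) * (k1 * t ^ ((N:ℝ) - α)) + M ^ (-α) * (k2 * (d/2) ^ ((N:ℝ) - β))
        ≤ ((2 * (1 + c0) / c0) ^ β * (1 + d) ^ (-β)) * (k1 * t ^ ((N:ℝ) - α)) +
          M ^ (-α) * (k2 * M ^ ((N:ℝ) - β)) := by
          apply add_le_add
          · exact mul_le_mul_of_nonneg_right h1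
              (mul_nonneg hk1nn (Real.rpow_nonneg ht.le _))
          · apply mul_le_mul_of_nonneg_left _ (Real.rpow_nonneg hM.le _)
            exact mul_le_mul_of_nonneg_left h2a hk2nn
      _ = a1 * P + k2 * (M ^ (-α) * M ^ ((N:ℝ) - β)) := by rw [ha1, hPdef]; ring
      _ = a1 * P + k2 * (M ^ (-β) * M ^ ((N:ℝ) - α)) := by rw [h2b]
      _ ≤ a1 * P + k2 * (((2 / c0 + 2) ^ β * (1 + d) ^ (-β)) * t ^ ((N:ℝ) - α)) := by
          apply add_le_add_right
          apply mul_le_mul_of_nonneg_left _ hk2nn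
          calc M ^ (-β) * M ^ ((N:ℝ) - α)
              ≤ M ^ (-β) * t ^ ((N:ℝ) - α) :=
                mul_le_mul_of_nonneg_left h2c (Real.rpow_nonneg hM.le _)
            _ ≤ ((2 / c0 + 2) ^ β * (1 + d) ^ (-β)) * t ^ ((N:ℝ) - α) :=
                mul_le_mul_of_nonneg_right h2d (Real.rpow_nonneg ht.le _)
      _ = (a1 + a2) * P := by rw [ha1, ha2, hPdef]; ring
      _ ≤ C * P := mul_le_mul_of_nonneg_right (by rw [hCdef]; linarith) hP
      _ = C * ((1 + d) ^ (-β) * t ^ ((N:ℝ) - α)) := by rw [hPdef]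
  · -- Case B : d < c0, hence t ≥ c0
    have hct : c0 ≤ t := by
      nlinarith [sq_nonneg d, sq_nonneg t, sq_nonneg (t - c0)]
    have hball : ∀ z ∈ Metric.ball w 1, (t + ‖z‖) ^ (-α) ≤ t ^ (-α) := by
      intro z _
      have hz0 : (0:ℝ) ≤ ‖z‖ := norm_nonneg z
      have := helper_rpow_inv ht (by linarith : (0:ℝ) < t + ‖z‖) one_pos
        (by linarith : (0:ℝ) ≤ α) (by linarith : t ≤ 1 * (t + ‖z‖))
      simpa using this
    refine le_trans (key 1 (t ^ (-α)) one_pos (Real.rpow_nonneg ht.le _) hball) ?_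
    apply ENNReal.ofReal_le_ofReal
    have b1 : (1:ℝ) ^ (-β) ≤ (1 + c0) ^ β * (1 + d) ^ (-β) := by
      apply helper_rpow_inv (by positivity) one_pos (by positivity) hβ0.le
      nlinarith
    rw [Real.one_rpow] at b1
    have b2 : t ^ (-α) = t ^ (-(N:ℝ)) * t ^ ((N:ℝ) - α) := by
      rw [← Real.rpow_add ht]; ring_nf
    have b3 : t ^ (-(N:ℝ)) ≤ c0 ^ (-(N:ℝ)) := by
      have := helper_rpow_inv hc0 ht one_pos (by positivity : (0:ℝ) ≤ (N:ℝ))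
        (by linarith : c0 ≤ 1 * t)
      rw [Real.one_rpow, one_mul] at this
      exact this
    calc (1:ℝ) ^ (-β) * (k1 * t ^ ((N:ℝ) - α)) + t ^ (-α) * (k2 * (1:ℝ) ^ ((N:ℝ) - β))
        = k1 * t ^ ((N:ℝ) - α) + k2 * (t ^ (-(N:ℝ)) * t ^ ((N:ℝ) - α)) := by
          rw [Real.one_rpow, Real.one_rpow, b2]; ring
      _ ≤ k1 * (((1 + c0) ^ β * (1 + d) ^ (-β)) * t ^ ((N:ℝ) - α)) +
          k2 * (c0 ^ (-(N:ℝ)) * (((1 + c0) ^ β * (1 + d) ^ (-β)) * t ^ ((N:ℝ) - α))) := by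
          apply add_le_add
          · apply mul_le_mul_of_nonneg_left _ hk1nn
            calc t ^ ((N:ℝ) - α) = 1 * t ^ ((N:ℝ) - α) := by ring
              _ ≤ ((1 + c0) ^ β * (1 + d) ^ (-β)) * t ^ ((N:ℝ) - α) :=
                mul_le_mul_of_nonneg_right b1 (Real.rpow_nonneg ht.le _)
          · apply mul_le_mul_of_nonneg_left _ hk2nn
            calc t ^ (-(N:ℝ)) * t ^ ((N:ℝ) - α)
                ≤ c0 ^ (-(N:ℝ)) * t ^ ((N:ℝ) - α) :=
                  mul_le_mul_of_nonneg_right b3 (Real.rpow_nonneg ht.le _)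
              _ = c0 ^ (-(N:ℝ)) * (1 * t ^ ((N:ℝ) - α)) := by ring
              _ ≤ c0 ^ (-(N:ℝ)) * (((1 + c0) ^ β * (1 + d) ^ (-β)) * t ^ ((N:ℝ) - α)) := by
                  apply mul_le_mul_of_nonneg_left _ (Real.rpow_nonneg hc0.le _)
                  exact mul_le_mul_of_nonneg_right b1 (Real.rpow_nonneg ht.le _)
      _ = (a3 + a4) * P := by rw [ha3, ha4, hPdef]; ring
      _ ≤ C * P := mul_le_mul_of_nonneg_right (by rw [hCdef]; linarith) hP
      _ = C * ((1 + d) ^ (-β) * t ^ ((N:ℝ) - α)) := by rw [hPdef]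


/-- Remark A.2, case `β < N`: for `α > N` and `0 < β < N`, there is `C > 0` such that
for all `ε ∈ (0,1]`, whenever `|y−x|² + t² ≥ ρ²` and `t > 0`,
`∫_{ℝ^N} (t+|z|)^{−α} (1+|y−z−x|/ε)^{−β} dz
  ≤ C ε^β ((1+|y−x|)^{−β} t^{−(α−N)} + (1+|y−x|)^{−α})`. -/
theorem stmt5 (N : ℕ) (hN : 1 ≤ N) (ρ α β : ℝ) (hρ : 0 < ρ) (hα : (N : ℝ) < α)
    (hβ0 : 0 < β) (hβ : β < N) :
    ∃ C : ℝ, 0 < C ∧ ∀ ε : ℝ, ε ∈ Set.Ioc (0 : ℝ) 1 →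
      ∀ x y : EuclideanSpace ℝ (Fin N), ∀ t : ℝ, 0 < t →
      ρ ^ 2 ≤ ‖y - x‖ ^ 2 + t ^ 2 →
      (∫ z : EuclideanSpace ℝ (Fin N),
          (t + ‖z‖) ^ (-α) * (1 + ‖y - z - x‖ / ε) ^ (-β)) ≤
        C * ε ^ β * ((1 + ‖y - x‖) ^ (-β) * t ^ (-(α - (N : ℝ))) +
          (1 + ‖y - x‖) ^ (-α)) := by
  
  obtain ⟨C0, hC0, hmain⟩ := main_lint N hN ρ α β hρ hα hβ0 hβ
  refine ⟨C0, hC0, ?_⟩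
  intro ε hε x y t ht hρ2
  obtain ⟨hε0, hε1⟩ := hε
  set w : EuclideanSpace ℝ (Fin N) := y - x with hw
  have hεβ : 0 ≤ ε ^ β := Real.rpow_nonneg hε0.le β
  have hpt : ∀ z : EuclideanSpace ℝ (Fin N),
      (t + ‖z‖) ^ (-α) * (1 + ‖y - z - x‖ / ε) ^ (-β)
      = (t + ‖z‖) ^ (-α) * (ε ^ β * (ε + ‖w - z‖) ^ (-β)) := by
    intro z
    have hsub : y - z - x = w - z := sub_right_comm y z x
    rw [hsub]
    congr 1
    have hwz : (0:ℝ) ≤ ‖w - z‖ := norm_nonneg _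
    have h1 : 1 + ‖w - z‖ / ε = (ε + ‖w - z‖) / ε := by field_simp
    rw [h1, div_eq_mul_inv, Real.mul_rpow (by positivity) (by positivity),
      Real.inv_rpow hε0.le, Real.rpow_neg hε0.le, inv_inv]
    ring
  have hcont : Continuous fun z : EuclideanSpace ℝ (Fin N) =>
      (t + ‖z‖) ^ (-α) * (ε ^ β * (ε + ‖w - z‖) ^ (-β)) := by
    apply Continuous.mul
    · exact (continuous_const.add continuous_norm).rpow_const
        (fun z => Or.inl (ne_of_gt (add_pos_of_pos_of_nonneg ht (norm_nonneg _))))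
    · apply Continuous.mul continuous_const
      apply Continuous.rpow_const
        (continuous_const.add (continuous_const.sub continuous_id).norm)
      intro z
      left
      have : (0:ℝ) ≤ ‖w - z‖ := norm_nonneg _
      exact ne_of_gt (add_pos_of_pos_of_nonneg hε0 this)
  have hnn : ∀ z : EuclideanSpace ℝ (Fin N),
      0 ≤ (t + ‖z‖) ^ (-α) * (ε ^ β * (ε + ‖w - z‖) ^ (-β)) := by
    intro z
    have h1 : (0:ℝ) ≤ ‖z‖ := norm_nonneg _
    have h2 : (0:ℝ) ≤ ‖w - z‖ := norm_nonneg _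
    positivity
  calc (∫ z : EuclideanSpace ℝ (Fin N),
          (t + ‖z‖) ^ (-α) * (1 + ‖y - z - x‖ / ε) ^ (-β))
      = ∫ z : EuclideanSpace ℝ (Fin N),
          (t + ‖z‖) ^ (-α) * (ε ^ β * (ε + ‖w - z‖) ^ (-β)) := by
        apply integral_congr_ae
        exact Filter.Eventually.of_forall hpt
    _ = (∫⁻ z : EuclideanSpace ℝ (Fin N), ENNReal.ofReal
          ((t + ‖z‖) ^ (-α) * (ε ^ β * (ε + ‖w - z‖) ^ (-β)))).toReal := by
        rw [integral_eq_lintegral_of_nonneg_ae (Filter.Eventually.of_forall hnn)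
          hcont.aestronglyMeasurable]
    _ ≤ C0 * ε ^ β * ((1 + ‖y - x‖) ^ (-β) * t ^ (-(α - (N : ℝ))) +
          (1 + ‖y - x‖) ^ (-α)) := by
        have hd0 : (0:ℝ) ≤ ‖y - x‖ := norm_nonneg _
        apply ENNReal.toReal_le_of_le_ofReal (by positivity)
        calc ∫⁻ z : EuclideanSpace ℝ (Fin N), ENNReal.ofReal
              ((t + ‖z‖) ^ (-α) * (ε ^ β * (ε + ‖w - z‖) ^ (-β)))
            = ∫⁻ z : EuclideanSpace ℝ (Fin N), ENNReal.ofReal (ε ^ β) *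
              (ENNReal.ofReal ((t + ‖z‖) ^ (-α)) *
               ENNReal.ofReal ((ε + ‖w - z‖) ^ (-β))) := by
              apply lintegral_congr
              intro z
              have h1 : (0:ℝ) ≤ ‖z‖ := norm_nonneg _
              have h2 : (0:ℝ) ≤ ‖w - z‖ := norm_nonneg _
              rw [ENNReal.ofReal_mul (by positivity), ENNReal.ofReal_mul hεβ]
              ring
          _ = ENNReal.ofReal (ε ^ β) * ∫⁻ z : EuclideanSpace ℝ (Fin N),
              ENNReal.ofReal ((t + ‖z‖) ^ (-α)) *
               ENNReal.ofReal ((ε + ‖w - z‖) ^ (-β)) :=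
              lintegral_const_mul' _ _ ENNReal.ofReal_ne_top
          _ ≤ ENNReal.ofReal (ε ^ β) *
              ENNReal.ofReal (C0 * ((1 + ‖w‖) ^ (-β) * t ^ ((N:ℝ) - α))) :=
              mul_le_mul_right (hmain w ε t hε0 ht hρ2) _
          _ ≤ ENNReal.ofReal (C0 * ε ^ β * ((1 + ‖y - x‖) ^ (-β) * t ^ (-(α - (N : ℝ))) +
              (1 + ‖y - x‖) ^ (-α))) := by
              rw [← ENNReal.ofReal_mul hεβ]
              apply ENNReal.ofReal_le_ofReal
              have he : t ^ ((N:ℝ) - α) = t ^ (-(α - (N:ℝ))) := by ring_nf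
              have hY : (0:ℝ) ≤ (1 + ‖y - x‖) ^ (-α) :=
                Real.rpow_nonneg (by positivity) _
              have hX : (0:ℝ) ≤ (1 + ‖y - x‖) ^ (-β) * t ^ (-(α - (N:ℝ))) :=
                mul_nonneg (Real.rpow_nonneg (by positivity) _)
                  (Real.rpow_nonneg ht.le _)
              rw [← hw, he]
              nlinarith [mul_nonneg (mul_nonneg hC0.le hεβ) hY,
                mul_nonneg (mul_nonneg hC0.le hεβ) hX]
end
end

section
/- Let N ≥ 1 be an integer, ρ > 0, and let α, β be real constants with α > N and β > N. Then there exists a constant C = C(N, α, β, ρ) > 0 such that for all ε ∈ (0, 1], all x, y ∈ ℝ^N, and all t > 0 satisfying |y−x|² + t² ≥ ρ², one has ∫_{ℝ^N} (t+|z|)^{−α} · (1 + |y−z−x|/ε)^{−β} dz ≤ C · ( ε^β · (1+|y−x|)^{−β} · t^{−(α−N)} + ε^N · (1+|y−x|)^{−α} ). -/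
open MeasureTheory Set Module

noncomputable section

variable {N : ℕ}

lemma myCont {s r : ℝ} (hs : 0 < s) :
    Continuous (fun z : EuclideanSpace ℝ (Fin N) => (s + ‖z‖) ^ (-r)) :=
  (continuous_const.add continuous_norm).rpow_const (fun z => Or.inl (add_pos_of_pos_of_nonneg hs (norm_nonneg z)).ne')

lemma myEq {s r : ℝ} (hs : 0 < s) (z : EuclideanSpace ℝ (Fin N)) :
    (s + ‖z‖) ^ (-r) = s ^ (-r) * (1 + ‖s⁻¹ • z‖) ^ (-r) := by
  rw [norm_smul, norm_inv, Real.norm_eq_abs, abs_of_pos hs]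
  have h1 : 1 + s⁻¹ * ‖z‖ = (s + ‖z‖) / s := by field_simp
  rw [h1, Real.div_rpow (by positivity) hs.le, mul_comm,
    div_mul_cancel₀ _ (ne_of_gt (Real.rpow_pos_of_pos hs _))]

lemma myIntegrable {s r : ℝ} (hs : 0 < s) (hr : (N : ℝ) < r) :
    Integrable (fun z : EuclideanSpace ℝ (Fin N) => (s + ‖z‖) ^ (-r)) := by
  have h' : (finrank ℝ (EuclideanSpace ℝ (Fin N)) : ℝ) < r := by
    rw [finrank_euclideanSpace_fin]; exact hr
  have h2 := (integrable_one_add_norm (μ := volume) h').comp_smul (inv_ne_zero hs.ne')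
  exact (h2.const_mul (s ^ (-r))).congr (Filter.Eventually.of_forall fun z => (myEq hs z).symm)

lemma myIntegral {s r : ℝ} (hs : 0 < s) :
    ∫ z : EuclideanSpace ℝ (Fin N), (s + ‖z‖) ^ (-r)
      = s ^ ((N : ℝ) - r) * ∫ u : EuclideanSpace ℝ (Fin N), (1 + ‖u‖) ^ (-r) := by
  rw [show (fun z : EuclideanSpace ℝ (Fin N) => (s + ‖z‖) ^ (-r)) = fun z => s ^ (-r) * (1 + ‖s⁻¹ • z‖) ^ (-r) from funext fun z => myEq hs z]
  rw [MeasureTheory.integral_const_mul, Measure.integral_comp_inv_smul_of_nonneg volume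
    (fun u : EuclideanSpace ℝ (Fin N) => (1 + ‖u‖) ^ (-r)) hs.le,
    finrank_euclideanSpace_fin, smul_eq_mul, sub_eq_add_neg, Real.rpow_add hs,
    Real.rpow_natCast]
  ring

lemma myDiv {x c r : ℝ} (hx : 0 ≤ x) (hc : 0 < c) :
    (x / c) ^ (-r) = c ^ r * x ^ (-r) := by
  rw [Real.div_rpow hx hc.le, Real.rpow_neg hc.le]; field_simp

lemma myScale {a ε r : ℝ} (ha : 0 ≤ a) (hε : 0 < ε) :
    (1 + a / ε) ^ (-r) = ε ^ r * (ε + a) ^ (-r) := by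
  rw [show 1 + a / ε = (ε + a) / ε by field_simp, myDiv (by positivity) hε]
set_option maxHeartbeats 1000000 in
/-- Remark A.2, case `β > N`: for `α > N` and `β > N`, there is `C > 0` such that
for all `ε ∈ (0,1]`, whenever `|y−x|² + t² ≥ ρ²` and `t > 0`,
`∫_{ℝ^N} (t+|z|)^{−α} (1+|y−z−x|/ε)^{−β} dz
  ≤ C (ε^β (1+|y−x|)^{−β} t^{−(α−N)} + ε^N (1+|y−x|)^{−α})`. -/
theorem stmt6 (N : ℕ) (hN : 1 ≤ N) (ρ α β : ℝ) (hρ : 0 < ρ) (hα : (N : ℝ) < α)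
    (hβ : (N : ℝ) < β) :
    ∃ C : ℝ, 0 < C ∧ ∀ ε : ℝ, ε ∈ Set.Ioc (0 : ℝ) 1 →
      ∀ x y : EuclideanSpace ℝ (Fin N), ∀ t : ℝ, 0 < t →
      ρ ^ 2 ≤ ‖y - x‖ ^ 2 + t ^ 2 →
      (∫ z : EuclideanSpace ℝ (Fin N),
          (t + ‖z‖) ^ (-α) * (1 + ‖y - z - x‖ / ε) ^ (-β)) ≤
        C * (ε ^ β * (1 + ‖y - x‖) ^ (-β) * t ^ (-(α - (N : ℝ))) +
          ε ^ (N : ℝ) * (1 + ‖y - x‖) ^ (-α)) := by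
  have hα0 : (0:ℝ) < α := lt_of_le_of_lt (Nat.cast_nonneg N) hα
  have hβ0 : (0:ℝ) < β := lt_of_le_of_lt (Nat.cast_nonneg N) hβ
  set J1 := ∫ u : EuclideanSpace ℝ (Fin N), (1 + ‖u‖) ^ (-β) with hJ1def
  set J2 := ∫ u : EuclideanSpace ℝ (Fin N), (1 + ‖u‖) ^ (-α) with hJ2def
  have hJ1 : 0 ≤ J1 := integral_nonneg fun u => Real.rpow_nonneg (by positivity) _
  have hJ2 : 0 ≤ J2 := integral_nonneg fun u => Real.rpow_nonneg (by positivity) _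
  set c1 : ℝ := min (ρ/2) 1 / 2 with hc1def
  set c2 : ℝ := min 1 ρ / 4 with hc2def
  have hc1 : 0 < c1 := div_pos (lt_min (by linarith) one_pos) two_pos
  have hc2 : 0 < c2 := div_pos (lt_min one_pos hρ) (by norm_num)
  set CB := c2 ^ (-α) * J1 with hCBdef
  set CA1 := (4:ℝ) ^ β * c1 ^ (-β) * J2 with hCA1def
  set CA2 := (4:ℝ) ^ β * ((ρ/2) ^ (-α) * (1+ρ/2) ^ α) * J1 with hCA2def
  have hCB : 0 ≤ CB := mul_nonneg (Real.rpow_nonneg hc2.le _) hJ1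
  have hCA1 : 0 ≤ CA1 := mul_nonneg (mul_nonneg (Real.rpow_nonneg (by norm_num) _)
    (Real.rpow_nonneg hc1.le _)) hJ2
  have hCA2 : 0 ≤ CA2 := mul_nonneg (mul_nonneg (Real.rpow_nonneg (by norm_num) _)
    (mul_nonneg (Real.rpow_nonneg (by positivity) _) (Real.rpow_nonneg (by positivity) _))) hJ1
  clear_value J1 J2 c1 c2 CB CA1 CA2
  refine ⟨CB + CA1 + CA2 + 1, by linarith, ?_⟩
  intro ε hε x y t ht hcon
  obtain ⟨hε0, hε1⟩ := hε
  set w := y - x with hwdef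
  have hw0 : (0:ℝ) ≤ ‖w‖ := norm_nonneg w
  -- rewrite the integrand
  have hre : (fun z : EuclideanSpace ℝ (Fin N) => (t + ‖z‖) ^ (-α) * (1 + ‖y - z - x‖ / ε) ^ (-β))
      = fun z : EuclideanSpace ℝ (Fin N) => (t + ‖z‖) ^ (-α) * (ε ^ β * (ε + ‖w - z‖) ^ (-β)) := by
    funext z
    rw [sub_right_comm, ← hwdef, myScale (norm_nonneg _) hε0]
  rw [hre]
  -- basic geometric facts
  have hρtw : ρ ≤ t + ‖w‖ := by nlinarith [mul_nonneg ht.le hw0]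
  have hc2tw : c2 * (1 + ‖w‖) ≤ t + ‖w‖ / 2 := by
    have h1 : min 1 ρ ≤ 1 := min_le_left _ _
    have h2 : min 1 ρ ≤ ρ := min_le_right _ _
    have h3 : 0 < min 1 ρ := lt_min one_pos hρ
    rw [hc2def]
    nlinarith [mul_le_of_le_one_left hw0 h1]
  -- the two comparison functions
  set fA := fun z : EuclideanSpace ℝ (Fin N) => (4:ℝ) ^ β * ε ^ β * ((t + ‖z‖) ^ (-α) * ((ε + ‖w‖) + ‖z‖) ^ (-β))
    with hfAdef
  set fB := fun z : EuclideanSpace ℝ (Fin N) => (t + ‖w‖ / 2) ^ (-α) * (ε ^ β * (ε + ‖w - z‖) ^ (-β)) with hfBdef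
  have hfA0 : ∀ z, 0 ≤ fA z := fun z => by
    rw [hfAdef]; positivity
  have hfB0 : ∀ z, 0 ≤ fB z := fun z => by
    rw [hfBdef]; positivity
  clear_value fA fB
  -- integrability
  have hIg : Integrable (fun z : EuclideanSpace ℝ (Fin N) => (t + ‖z‖) ^ (-α)) := myIntegrable ht hα
  have hIk : Integrable (fun z : EuclideanSpace ℝ (Fin N) => ((ε + ‖w‖) + ‖z‖) ^ (-β)) :=
    myIntegrable (by positivity) hβ
  have hIkε : Integrable (fun z : EuclideanSpace ℝ (Fin N) => (ε + ‖z‖) ^ (-β)) := myIntegrable hε0 hβ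
  have hIA0 : Integrable (fun z : EuclideanSpace ℝ (Fin N) => (t + ‖z‖) ^ (-α) * ((ε + ‖w‖) + ‖z‖) ^ (-β)) := by
    refine (hIg.const_mul ((ε + ‖w‖) ^ (-β))).mono' ?_ (Filter.Eventually.of_forall fun z => ?_)
    · exact ((myCont ht).mul (myCont (by positivity : (0:ℝ) < ε + ‖w‖))).aestronglyMeasurable
    · rw [Real.norm_eq_abs, abs_of_nonneg (by positivity)]
      have : ((ε + ‖w‖) + ‖z‖) ^ (-β) ≤ (ε + ‖w‖) ^ (-β) :=
        Real.rpow_le_rpow_of_nonpos (by positivity) (le_add_of_nonneg_right (norm_nonneg z))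
          (by linarith)
      calc (t + ‖z‖) ^ (-α) * ((ε + ‖w‖) + ‖z‖) ^ (-β)
          ≤ (t + ‖z‖) ^ (-α) * (ε + ‖w‖) ^ (-β) := by
            exact mul_le_mul_of_nonneg_left this (Real.rpow_nonneg (by positivity) _)
        _ = (ε + ‖w‖) ^ (-β) * (t + ‖z‖) ^ (-α) := by ring
  have hIA : Integrable fA := by
    rw [hfAdef]; exact hIA0.const_mul _
  have hIB : Integrable fB := by
    rw [hfBdef]
    exact (((hIkε.comp_sub_left w).const_mul (ε ^ β)).const_mul _)
  -- pointwise bound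
  have hpt : ∀ z : EuclideanSpace ℝ (Fin N), (t + ‖z‖) ^ (-α) * (ε ^ β * (ε + ‖w - z‖) ^ (-β)) ≤ fA z + fB z := by
    intro z
    rcases le_total ‖z‖ ‖w - z‖ with hcase | hcase
    · -- A side
      have hwle : ‖w‖ ≤ ‖w - z‖ + ‖z‖ := by
        calc ‖w‖ = ‖(w - z) + z‖ := by rw [sub_add_cancel]
          _ ≤ ‖w - z‖ + ‖z‖ := norm_add_le _ _
      have h4 : ((ε + ‖w‖) + ‖z‖) / 4 ≤ ε + ‖w - z‖ := by nlinarith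
      have hle : (ε + ‖w - z‖) ^ (-β) ≤ (4:ℝ) ^ β * ((ε + ‖w‖) + ‖z‖) ^ (-β) := by
        calc (ε + ‖w - z‖) ^ (-β) ≤ (((ε + ‖w‖) + ‖z‖) / 4) ^ (-β) :=
              Real.rpow_le_rpow_of_nonpos (by positivity) h4 (by linarith)
          _ = (4:ℝ) ^ β * ((ε + ‖w‖) + ‖z‖) ^ (-β) := myDiv (by positivity) (by norm_num)
      have : (t + ‖z‖) ^ (-α) * (ε ^ β * (ε + ‖w - z‖) ^ (-β)) ≤ fA z := by
        rw [hfAdef]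
        calc (t + ‖z‖) ^ (-α) * (ε ^ β * (ε + ‖w - z‖) ^ (-β))
            ≤ (t + ‖z‖) ^ (-α) * (ε ^ β * ((4:ℝ) ^ β * ((ε + ‖w‖) + ‖z‖) ^ (-β))) := by
              refine mul_le_mul_of_nonneg_left ?_ (Real.rpow_nonneg (by positivity) _)
              exact mul_le_mul_of_nonneg_left hle (Real.rpow_nonneg hε0.le _)
          _ = (4:ℝ) ^ β * ε ^ β * ((t + ‖z‖) ^ (-α) * ((ε + ‖w‖) + ‖z‖) ^ (-β)) := by ring
      exact le_trans this (le_add_of_nonneg_right (hfB0 z))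
    · -- B side
      have hwle : ‖w‖ ≤ ‖w - z‖ + ‖z‖ := by
        calc ‖w‖ = ‖(w - z) + z‖ := by rw [sub_add_cancel]
          _ ≤ ‖w - z‖ + ‖z‖ := norm_add_le _ _
      have hle : (t + ‖z‖) ^ (-α) ≤ (t + ‖w‖ / 2) ^ (-α) :=
        Real.rpow_le_rpow_of_nonpos (by positivity) (by linarith) (by linarith)
      have : (t + ‖z‖) ^ (-α) * (ε ^ β * (ε + ‖w - z‖) ^ (-β)) ≤ fB z := by
        rw [hfBdef]
        exact mul_le_mul_of_nonneg_right hle (by positivity)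
      exact le_trans this (le_add_of_nonneg_left (hfA0 z))
  have hIf : Integrable (fun z : EuclideanSpace ℝ (Fin N) => (t + ‖z‖) ^ (-α) * (ε ^ β * (ε + ‖w - z‖) ^ (-β))) := by
    refine (hIA.add hIB).mono' ?_ (Filter.Eventually.of_forall fun z => ?_)
    · refine ((myCont ht).mul (continuous_const.mul ?_)).aestronglyMeasurable
      have : Continuous fun z : EuclideanSpace ℝ (Fin N) => ε + ‖w - z‖ :=
        continuous_const.add (continuous_const.sub continuous_id).norm
      exact this.rpow_const fun z => Or.inl (by positivity)
    · rw [Real.norm_eq_abs, abs_of_nonneg (by positivity)]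
      exact hpt z
  -- split the integral
  have hsplit : (∫ z : EuclideanSpace ℝ (Fin N), (t + ‖z‖) ^ (-α) * (ε ^ β * (ε + ‖w - z‖) ^ (-β)))
      ≤ (∫ z : EuclideanSpace ℝ (Fin N), fA z) + ∫ z : EuclideanSpace ℝ (Fin N), fB z := by
    rw [← integral_add hIA hIB]
    exact integral_mono hIf (hIA.add hIB) hpt
  -- value of ∫ fB
  have hεN : ε ^ β * ε ^ ((N:ℝ) - β) = ε ^ ((N:ℝ)) := by
    rw [← Real.rpow_add hε0]; ring_nf
  have hBval : (∫ z : EuclideanSpace ℝ (Fin N), fB z)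
      = (t + ‖w‖ / 2) ^ (-α) * (ε ^ β * (ε ^ ((N:ℝ) - β) * J1)) := by
    rw [hfBdef]
    rw [integral_const_mul, integral_const_mul,
      integral_sub_left_eq_self (fun z : EuclideanSpace ℝ (Fin N) => (ε + ‖z‖) ^ (-β)) volume w, myIntegral hε0, ← hJ1def]
  have hBbound : (∫ z : EuclideanSpace ℝ (Fin N), fB z) ≤ CB * (ε ^ ((N:ℝ)) * (1 + ‖w‖) ^ (-α)) := by
    rw [hBval, hCBdef]
    have hP : (t + ‖w‖ / 2) ^ (-α) ≤ c2 ^ (-α) * (1 + ‖w‖) ^ (-α) := by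
      calc (t + ‖w‖ / 2) ^ (-α) ≤ (c2 * (1 + ‖w‖)) ^ (-α) :=
            Real.rpow_le_rpow_of_nonpos (by positivity) hc2tw (by linarith)
        _ = c2 ^ (-α) * (1 + ‖w‖) ^ (-α) := Real.mul_rpow hc2.le (by positivity)
    calc (t + ‖w‖ / 2) ^ (-α) * (ε ^ β * (ε ^ ((N:ℝ) - β) * J1))
        ≤ (c2 ^ (-α) * (1 + ‖w‖) ^ (-α)) * (ε ^ β * (ε ^ ((N:ℝ) - β) * J1)) := by
          refine mul_le_mul_of_nonneg_right hP (mul_nonneg (Real.rpow_nonneg hε0.le _) (mul_nonneg (Real.rpow_nonneg hε0.le _) hJ1))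
      _ = (c2 ^ (-α) * J1) * ((ε ^ β * ε ^ ((N:ℝ) - β)) * (1 + ‖w‖) ^ (-α)) := by ring
      _ = (c2 ^ (-α) * J1) * (ε ^ ((N:ℝ)) * (1 + ‖w‖) ^ (-α)) := by rw [hεN]
  -- value of ∫ fA
  have hAval : (∫ z : EuclideanSpace ℝ (Fin N), fA z)
      = (4:ℝ) ^ β * ε ^ β *
        ∫ z : EuclideanSpace ℝ (Fin N), (t + ‖z‖) ^ (-α) * ((ε + ‖w‖) + ‖z‖) ^ (-β) := by
    rw [hfAdef, integral_const_mul]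
  set T1 := ε ^ β * (1 + ‖w‖) ^ (-β) * t ^ (-(α - (N:ℝ))) with hT1def
  set T2 := ε ^ (N:ℝ) * (1 + ‖w‖) ^ (-α) with hT2def
  have hT1 : 0 ≤ T1 := by rw [hT1def]; positivity
  have hT2 : 0 ≤ T2 := by rw [hT2def]; positivity
  clear_value T1 T2
  have htN : t ^ ((N:ℝ) - α) = t ^ (-(α - (N:ℝ))) := by rw [neg_sub]
  rcases le_or_gt (ρ/2) ‖w‖ with hcw | hcw
  · -- case A1 : ‖w‖ large
    have hc1w : c1 * (1 + ‖w‖) ≤ ‖w‖ := by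
      have h1 : min (ρ/2) 1 ≤ ρ/2 := min_le_left _ _
      have h2 : min (ρ/2) 1 ≤ 1 := min_le_right _ _
      rw [hc1def]
      nlinarith [mul_le_of_le_one_left hw0 h2]
    have hinner : (∫ z : EuclideanSpace ℝ (Fin N), (t + ‖z‖) ^ (-α) * ((ε + ‖w‖) + ‖z‖) ^ (-β))
        ≤ (c1 ^ (-β) * (1 + ‖w‖) ^ (-β)) * (t ^ ((N:ℝ) - α) * J2) := by
      have hmono : ∀ z : EuclideanSpace ℝ (Fin N),
          (t + ‖z‖) ^ (-α) * ((ε + ‖w‖) + ‖z‖) ^ (-β)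
          ≤ (c1 ^ (-β) * (1 + ‖w‖) ^ (-β)) * (t + ‖z‖) ^ (-α) := by
        intro z
        have h5 : c1 * (1 + ‖w‖) ≤ (ε + ‖w‖) + ‖z‖ := by
          have := norm_nonneg z; linarith
        have h6 : ((ε + ‖w‖) + ‖z‖) ^ (-β) ≤ c1 ^ (-β) * (1 + ‖w‖) ^ (-β) := by
          calc ((ε + ‖w‖) + ‖z‖) ^ (-β) ≤ (c1 * (1 + ‖w‖)) ^ (-β) :=
                Real.rpow_le_rpow_of_nonpos (by positivity) h5 (by linarith)
            _ = c1 ^ (-β) * (1 + ‖w‖) ^ (-β) := Real.mul_rpow hc1.le (by positivity)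
        calc (t + ‖z‖) ^ (-α) * ((ε + ‖w‖) + ‖z‖) ^ (-β)
            ≤ (t + ‖z‖) ^ (-α) * (c1 ^ (-β) * (1 + ‖w‖) ^ (-β)) :=
              mul_le_mul_of_nonneg_left h6 (Real.rpow_nonneg (by positivity) _)
          _ = (c1 ^ (-β) * (1 + ‖w‖) ^ (-β)) * (t + ‖z‖) ^ (-α) := by ring
      calc (∫ z : EuclideanSpace ℝ (Fin N), (t + ‖z‖) ^ (-α) * ((ε + ‖w‖) + ‖z‖) ^ (-β))
          ≤ ∫ z : EuclideanSpace ℝ (Fin N),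
              (c1 ^ (-β) * (1 + ‖w‖) ^ (-β)) * (t + ‖z‖) ^ (-α) :=
            integral_mono hIA0 (hIg.const_mul _) hmono
        _ = (c1 ^ (-β) * (1 + ‖w‖) ^ (-β)) *
              ∫ z : EuclideanSpace ℝ (Fin N), (t + ‖z‖) ^ (-α) := integral_const_mul _ _
        _ = (c1 ^ (-β) * (1 + ‖w‖) ^ (-β)) * (t ^ ((N:ℝ) - α) * J2) := by
            rw [myIntegral ht, ← hJ2def]
    have hAbound : (∫ z : EuclideanSpace ℝ (Fin N), fA z) ≤ CA1 * T1 := by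
      rw [hAval, hCA1def, hT1def, ← htN]
      calc (4:ℝ) ^ β * ε ^ β *
            ∫ z : EuclideanSpace ℝ (Fin N), (t + ‖z‖) ^ (-α) * ((ε + ‖w‖) + ‖z‖) ^ (-β)
          ≤ (4:ℝ) ^ β * ε ^ β *
              ((c1 ^ (-β) * (1 + ‖w‖) ^ (-β)) * (t ^ ((N:ℝ) - α) * J2)) :=
            mul_le_mul_of_nonneg_left hinner (by positivity)
        _ = (4:ℝ) ^ β * c1 ^ (-β) * J2 * (ε ^ β * (1 + ‖w‖) ^ (-β) * t ^ ((N:ℝ) - α)) := by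
            ring
    calc (∫ z : EuclideanSpace ℝ (Fin N), (t + ‖z‖) ^ (-α) * (ε ^ β * (ε + ‖w - z‖) ^ (-β)))
        ≤ (∫ z : EuclideanSpace ℝ (Fin N), fA z) + ∫ z : EuclideanSpace ℝ (Fin N), fB z :=
          hsplit
      _ ≤ CA1 * T1 + CB * T2 := add_le_add hAbound hBbound
      _ ≤ (CB + CA1 + CA2 + 1) * (T1 + T2) := by
          nlinarith [mul_nonneg hCB hT1, mul_nonneg hCA2 hT1, mul_nonneg hCA1 hT2,
            mul_nonneg hCA2 hT2, hT1, hT2]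
  · -- case A2 : ‖w‖ small, t bounded below
    have htρ : ρ/2 ≤ t := by nlinarith
    have hinner : (∫ z : EuclideanSpace ℝ (Fin N), (t + ‖z‖) ^ (-α) * ((ε + ‖w‖) + ‖z‖) ^ (-β))
        ≤ t ^ (-α) * (ε ^ ((N:ℝ) - β) * J1) := by
      have hmono : ∀ z : EuclideanSpace ℝ (Fin N),
          (t + ‖z‖) ^ (-α) * ((ε + ‖w‖) + ‖z‖) ^ (-β) ≤ t ^ (-α) * (ε + ‖z‖) ^ (-β) := by
        intro z
        have h6 : ((ε + ‖w‖) + ‖z‖) ^ (-β) ≤ (ε + ‖z‖) ^ (-β) :=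
          Real.rpow_le_rpow_of_nonpos (by positivity) (by linarith) (by linarith)
        have h7 : (t + ‖z‖) ^ (-α) ≤ t ^ (-α) :=
          Real.rpow_le_rpow_of_nonpos ht (le_add_of_nonneg_right (norm_nonneg z))
            (by linarith)
        exact mul_le_mul h7 h6 (Real.rpow_nonneg (by positivity) _)
          (Real.rpow_nonneg ht.le _)
      calc (∫ z : EuclideanSpace ℝ (Fin N), (t + ‖z‖) ^ (-α) * ((ε + ‖w‖) + ‖z‖) ^ (-β))
          ≤ ∫ z : EuclideanSpace ℝ (Fin N), t ^ (-α) * (ε + ‖z‖) ^ (-β) :=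
            integral_mono hIA0 (hIkε.const_mul _) hmono
        _ = t ^ (-α) * ∫ z : EuclideanSpace ℝ (Fin N), (ε + ‖z‖) ^ (-β) :=
            integral_const_mul _ _
        _ = t ^ (-α) * (ε ^ ((N:ℝ) - β) * J1) := by rw [myIntegral hε0, ← hJ1def]
    have htα : t ^ (-α) ≤ (ρ/2) ^ (-α) * ((1+ρ/2) ^ α * (1 + ‖w‖) ^ (-α)) := by
      have h8 : t ^ (-α) ≤ (ρ/2) ^ (-α) :=
        Real.rpow_le_rpow_of_nonpos (by positivity) htρ (by linarith)
      have h9 : (1:ℝ) ≤ (1+ρ/2) ^ α * (1 + ‖w‖) ^ (-α) := by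
        have h10 : (1+ρ/2) ^ (-α) ≤ (1 + ‖w‖) ^ (-α) :=
          Real.rpow_le_rpow_of_nonpos (by positivity) (by linarith) (by linarith)
        calc (1:ℝ) = (1+ρ/2) ^ α * (1+ρ/2) ^ (-α) := by
              rw [← Real.rpow_add (by positivity)]; simp
          _ ≤ (1+ρ/2) ^ α * (1 + ‖w‖) ^ (-α) :=
            mul_le_mul_of_nonneg_left h10 (Real.rpow_nonneg (by positivity) _)
      calc t ^ (-α) = t ^ (-α) * 1 := (mul_one _).symm
        _ ≤ (ρ/2) ^ (-α) * ((1+ρ/2) ^ α * (1 + ‖w‖) ^ (-α)) :=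
          mul_le_mul h8 h9 zero_le_one (Real.rpow_nonneg (by positivity) _)
    have hAbound : (∫ z : EuclideanSpace ℝ (Fin N), fA z) ≤ CA2 * T2 := by
      rw [hAval, hCA2def, hT2def]
      calc (4:ℝ) ^ β * ε ^ β *
            ∫ z : EuclideanSpace ℝ (Fin N), (t + ‖z‖) ^ (-α) * ((ε + ‖w‖) + ‖z‖) ^ (-β)
          ≤ (4:ℝ) ^ β * ε ^ β * (t ^ (-α) * (ε ^ ((N:ℝ) - β) * J1)) :=
            mul_le_mul_of_nonneg_left hinner (by positivity)
        _ ≤ (4:ℝ) ^ β * ε ^ β *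
              (((ρ/2) ^ (-α) * ((1+ρ/2) ^ α * (1 + ‖w‖) ^ (-α))) * (ε ^ ((N:ℝ) - β) * J1)) := by
            refine mul_le_mul_of_nonneg_left (mul_le_mul_of_nonneg_right htα ?_) (by positivity)
            exact mul_nonneg (Real.rpow_nonneg hε0.le _) hJ1
        _ = (4:ℝ) ^ β * ((ρ/2) ^ (-α) * (1+ρ/2) ^ α) * J1 *
              ((ε ^ β * ε ^ ((N:ℝ) - β)) * (1 + ‖w‖) ^ (-α)) := by ring
        _ = (4:ℝ) ^ β * ((ρ/2) ^ (-α) * (1+ρ/2) ^ α) * J1 *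
              (ε ^ (N:ℝ) * (1 + ‖w‖) ^ (-α)) := by rw [hεN]
    calc (∫ z : EuclideanSpace ℝ (Fin N), (t + ‖z‖) ^ (-α) * (ε ^ β * (ε + ‖w - z‖) ^ (-β)))
        ≤ (∫ z : EuclideanSpace ℝ (Fin N), fA z) + ∫ z : EuclideanSpace ℝ (Fin N), fB z :=
          hsplit
      _ ≤ CA2 * T2 + CB * T2 := add_le_add hAbound hBbound
      _ ≤ (CB + CA1 + CA2 + 1) * (T1 + T2) := by
          nlinarith [mul_nonneg hCB hT1, mul_nonneg hCA2 hT1, mul_nonneg hCA1 hT1,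
            mul_nonneg hCA1 hT2, hT1, hT2]
end
end
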